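/- arXiv:2103.13271 — 6 statements merged into one kernel-verified Lean document; each statement's English description precedes it below -/
import Mathlib

section
/- For any positive integer n and indeterminates x_1,...,x_{n+1}, the multivariate Cayley formula holds: (x_1+...+x_{n+1})^{n-1} equals the sum over all labeled trees T on the vertex set {1,...,n+1} of the product over vertices v of x_v^{deg(v)-1}. -/
open Finset
open scoped Nat

lemma multinomial_subtype_ne {V : Type*} [Fintype V] [DecidableEq V] (u : V)
    (g : V → ℕ) (hu : g u = 0) :
    Nat.multinomial (univ : Finset {x : V // x ≠ u}) (fun x => g x.1) =
      Nat.multinomial (univ : Finset V) g := by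
  have hsum : ∑ x : {x : V // x ≠ u}, g x.1 = ∑ v ∈ (univ : Finset V).erase u, g v :=
    (Finset.sum_subtype (p := fun x => x ≠ u) ((univ : Finset V).erase u) (by simp) g).symm
  have hprod : ∏ x : {x : V // x ≠ u}, (g x.1)! = ∏ v ∈ (univ : Finset V).erase u, (g v)! :=
    (Finset.prod_subtype (p := fun x => x ≠ u) ((univ : Finset V).erase u) (by simp)
      (fun v => (g v)!)).symm
  unfold Nat.multinomial
  rw [hsum, hprod, Finset.sum_erase _ (by simp [hu]), Finset.prod_erase _ (by simp [hu])]

lemma multinomial_recurrence {α : Type*} [DecidableEq α] (s : Finset α) (f : α → ℕ)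
    (hs : 1 ≤ ∑ i ∈ s, f i) :
    Nat.multinomial s f =
      ∑ w ∈ s, if 1 ≤ f w then Nat.multinomial s (fun v => f v - if v = w then 1 else 0)
        else 0 := by
  have hP : 0 < ∏ i ∈ s, (f i)! := Nat.prod_factorial_pos s f
  refine Nat.eq_of_mul_eq_mul_left hP ?_
  rw [Nat.multinomial_spec, Finset.mul_sum]
  have key : ∀ w ∈ s, (∏ i ∈ s, (f i)!) *
      (if 1 ≤ f w then Nat.multinomial s (fun v => f v - if v = w then 1 else 0) else 0)
      = f w * (∑ i ∈ s, f i - 1)! := by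
    intro w hw
    by_cases h1 : 1 ≤ f w
    · rw [if_pos h1]
      have hprod : (∏ i ∈ s, (f i)!) = f w * ∏ i ∈ s, ((f i - if i = w then 1 else 0))! := by
        rw [← Finset.mul_prod_erase s _ hw, ← Finset.mul_prod_erase s
          (fun i => ((f i - if i = w then 1 else 0))!) hw]
        simp only [if_pos rfl]
        rw [← mul_assoc]
        congr 1
        · rw [← Nat.succ_pred_eq_of_pos h1, Nat.factorial_succ]
          simp [Nat.succ_pred_eq_of_pos h1]
        · exact Finset.prod_congr rfl fun i hi => by
            rw [if_neg (Finset.ne_of_mem_erase hi), Nat.sub_zero]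
      rw [hprod, mul_assoc, Nat.multinomial_spec]
      congr 2
      rw [← Finset.add_sum_erase s _ hw, ← Finset.add_sum_erase s f hw,
        Finset.sum_congr rfl (fun i hi => by
          rw [if_neg (Finset.ne_of_mem_erase hi), Nat.sub_zero])]
      rw [if_pos rfl]
      have : (s.erase w).sum f = ∑ x ∈ s.erase w, f x := rfl
      omega
    · rw [if_neg h1, mul_zero]
      have : f w = 0 := by omega
      rw [this, zero_mul]
  rw [Finset.sum_congr rfl key, ← Finset.sum_mul, ← Nat.succ_pred_eq_of_pos hs,
    Nat.factorial_succ]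
  simp [Nat.succ_pred_eq_of_pos hs]
open Finset

namespace SimpleGraph
variable {V : Type*} {G : SimpleGraph V}

lemma two_neighbors_of_interior {a b u : V} (p : G.Walk a b) (hp : p.IsPath)
    (hu : u ∈ p.support) (ha : u ≠ a) (hb : u ≠ b) :
    ∃ x y, x ≠ y ∧ G.Adj u x ∧ G.Adj u y := by
  induction p with
  | nil =>
    simp only [Walk.support_nil, List.mem_singleton] at hu
    exact absurd hu ha
  | @cons a c b h q ih =>
    simp only [Walk.support_cons, List.mem_cons] at hu
    rcases hu with rfl | hu
    · exact absurd rfl ha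
    rw [Walk.cons_isPath_iff] at hp
    by_cases hc : u = c
    · subst hc
      cases q with
      | nil => exact absurd rfl hb
      | @cons _ d _ h2 q2 =>
        refine ⟨a, d, ?_, h.symm, h2⟩
        rintro rfl
        exact hp.2 (by simp [Walk.support_cons, Walk.start_mem_support])
    · exact ih hp.1 (by simpa [hc] using hu) hc hb

lemma two_neighbors_of_cycle_base {u : V} (c : G.Walk u u) (hc : c.IsCycle) :
    ∃ x y, x ≠ y ∧ G.Adj u x ∧ G.Adj u y := by
  cases c with
  | nil => exact absurd hc (Walk.IsCycle.not_of_nil)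
  | @cons _ x₀ _ h q =>
    rw [Walk.cons_isCycle_iff] at hc
    rename' hc => hc'
    have hne : u ≠ x₀ := h.ne
    have hnil : ¬ q.reverse.Nil := Walk.not_nil_of_ne hne
    have hadj : G.Adj u (q.reverse.getVert 1) := Walk.adj_snd hnil
    have hmem : s(u, q.reverse.getVert 1) ∈ q.reverse.edges := by
      conv_lhs => rw [← Walk.cons_tail_eq q.reverse hnil]
      rw [Walk.edges_cons]
      exact List.mem_cons_self
    refine ⟨x₀, q.reverse.getVert 1, ?_, h, hadj⟩
    intro heq
    rw [Walk.edges_reverse, List.mem_reverse, ← heq] at hmem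
    exact hc'.2 hmem

lemma two_neighbors_of_mem_cycle_support {v u : V} (c : G.Walk v v) (hc : c.IsCycle)
    (hu : u ∈ c.support) : ∃ x y, x ≠ y ∧ G.Adj u x ∧ G.Adj u y := by
  classical
  exact two_neighbors_of_cycle_base (c.rotate _ hu) (hc.rotate hu)

lemma not_mem_cycle_support_of_nbr_subsingleton {u w : V} (hN : G.neighborSet u ⊆ {w})
    {v : V} (c : G.Walk v v) (hc : c.IsCycle) : u ∉ c.support := by
  intro hu
  obtain ⟨x, y, hxy, hx, hy⟩ := two_neighbors_of_mem_cycle_support c hc hu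
  have h1 : x = w := hN hx
  have h2 : y = w := hN hy
  exact hxy (h1.trans h2.symm)

lemma walk_lift {pred : V → Prop} {a b : V} (p : G.Walk a b)
    (hp : ∀ x ∈ p.support, pred x) (ha : pred a) (hb : pred b) :
    ∃ q : (G.comap (Function.Embedding.subtype pred)).Walk ⟨a, ha⟩ ⟨b, hb⟩,
      q.map (Embedding.comap (Function.Embedding.subtype pred) G).toHom = p := by
  induction p with
  | nil => exact ⟨Walk.nil, rfl⟩
  | @cons a c b h q ih =>
    have hc : pred c := hp c (by simp)
    obtain ⟨q', hq'⟩ := ih (fun x hx => hp x (by simp [hx])) hc hb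
    refine ⟨Walk.cons (by exact h) q', ?_⟩
    subst hq'; rfl

lemma exists_adj_of_connected (hG : G.Connected) [Nontrivial V] (v : V) :
    ∃ w, G.Adj v w := by
  obtain ⟨w, hw⟩ := exists_ne v
  obtain ⟨p⟩ := hG v w
  have hnil : ¬ p.Nil := Walk.not_nil_of_ne (Ne.symm hw)
  exact ⟨p.getVert 1, Walk.adj_snd hnil⟩

end SimpleGraph

namespace SimpleGraph
variable {V : Type*} {G : SimpleGraph V}

section DelLeaf
variable {u w : V}

lemma comap_subtype_neighborSet_eq (u : V) (x : {x : V // x ≠ u}) :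
    ((G.comap (Function.Embedding.subtype (· ≠ u))).neighborSet x) =
      Subtype.val ⁻¹' (G.neighborSet x.1) := by
  ext y
  simp only [mem_neighborSet, comap_adj, Function.Embedding.coe_subtype, Set.mem_preimage]

lemma ncard_comap_subtype_neighborSet (u : V) (x : {x : V // x ≠ u}) :
    ((G.comap (Function.Embedding.subtype (· ≠ u))).neighborSet x).ncard =
      (G.neighborSet x.1 \ {u}).ncard := by
  rw [← Set.ncard_image_of_injective _ Subtype.val_injective]
  congr 1
  ext b
  simp only [comap_subtype_neighborSet_eq, Set.mem_image, Set.mem_preimage,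
    Set.mem_diff, Set.mem_singleton_iff]
  constructor
  · rintro ⟨y, hy, rfl⟩
    exact ⟨hy, y.2⟩
  · rintro ⟨hb, hbu⟩
    exact ⟨⟨b, hbu⟩, hb, rfl⟩

lemma isTree_comap_of_leaf (hT : G.IsTree) (hN : G.neighborSet u = {w}) :
    (G.comap (Function.Embedding.subtype (· ≠ u))).IsTree := by
  classical
  have hadj : G.Adj u w := by rw [← mem_neighborSet, hN]; rfl
  have hwu : w ≠ u := hadj.ne'
  have hpath_avoid : ∀ {a b : V}, a ≠ u → b ≠ u → ∀ (p : G.Walk a b), p.IsPath →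
      ∀ x ∈ p.support, x ≠ u := by
    intro a b ha hb p hp x hx hxu
    obtain ⟨y, z, hyz, hy, hz⟩ := two_neighbors_of_interior p hp (hxu ▸ hx)
      (fun h => ha h.symm) (fun h => hb h.symm)
    have h1 : y = w := by
      have : y ∈ G.neighborSet u := hy
      rwa [hN, Set.mem_singleton_iff] at this
    have h2 : z = w := by
      have : z ∈ G.neighborSet u := hz
      rwa [hN, Set.mem_singleton_iff] at this
    exact hyz (h1.trans h2.symm)
  constructor
  · rw [connected_iff]
    refine ⟨?_, ⟨⟨w, hwu⟩⟩⟩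
    intro a b
    obtain ⟨p⟩ := hT.isConnected a.1 b.1
    have hp := p.toPath
    obtain ⟨q, _⟩ := walk_lift (pred := (· ≠ u)) hp.1
      (hpath_avoid a.2 b.2 hp.1 hp.2) a.2 b.2
    exact ⟨q⟩
  · intro v c hc
    have := hc.map (f := (Embedding.comap (Function.Embedding.subtype (· ≠ u)) G).toHom)
      (Embedding.comap (Function.Embedding.subtype (· ≠ u)) G).injective
    exact hT.IsAcyclic _ this

end DelLeaf

section Attach
variable {u : V} {T' : SimpleGraph {x : V // x ≠ u}} {w : {x : V // x ≠ u}}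

/-- Attaching the pendant vertex `u` to `w`. -/
def attach (u : V) (T' : SimpleGraph {x : V // x ≠ u})
    (w : {x : V // x ≠ u}) : SimpleGraph V where
  Adj a b := (∃ x y : {x : V // x ≠ u}, T'.Adj x y ∧ x.1 = a ∧ y.1 = b)
      ∨ (a = u ∧ b = w.1) ∨ (a = w.1 ∧ b = u)
  symm := by
    constructor
    rintro a b (⟨x, y, h, rfl, rfl⟩ | ⟨rfl, rfl⟩ | ⟨rfl, rfl⟩)
    · exact Or.inl ⟨y, x, h.symm, rfl, rfl⟩
    · exact Or.inr (Or.inr ⟨rfl, rfl⟩)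
    · exact Or.inr (Or.inl ⟨rfl, rfl⟩)
  loopless := by
    constructor
    rintro a (⟨x, y, h, rfl, hyx⟩ | ⟨h1, h2⟩ | ⟨h1, h2⟩)
    · exact h.ne (Subtype.val_injective hyx.symm)
    · exact w.2 (h2.symm.trans h1)
    · exact w.2 (h1.symm.trans h2)

lemma attach_adj {a b : V} :
    (attach u T' w).Adj a b ↔ (∃ x y : {x : V // x ≠ u}, T'.Adj x y ∧ x.1 = a ∧ y.1 = b)
      ∨ (a = u ∧ b = w.1) ∨ (a = w.1 ∧ b = u) := Iff.rfl
lemma attach_neighborSet_u : (attach u T' w).neighborSet u = {w.1} := by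
  ext b
  simp only [mem_neighborSet, attach_adj, Set.mem_singleton_iff]
  constructor
  · rintro (⟨x, y, _, hx, _⟩ | ⟨_, rfl⟩ | ⟨h, _⟩)
    · exact absurd hx x.2
    · rfl
    · exact absurd h.symm w.2
  · rintro rfl
    tauto

lemma attach_comap : (attach u T' w).comap (Function.Embedding.subtype (· ≠ u)) = T' := by
  ext x y
  simp only [comap_adj, Function.Embedding.coe_subtype, attach_adj]
  constructor
  · rintro (⟨x', y', h, hx, hy⟩ | ⟨h, _⟩ | ⟨_, h⟩)
    · rwa [Subtype.val_injective hx, Subtype.val_injective hy] at h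
    · exact absurd h x.2
    · exact absurd h y.2
  · intro h
    exact Or.inl ⟨x, y, h, rfl, rfl⟩

lemma attach_neighborSet_ne (x : {x : V // x ≠ u}) (hxw : x ≠ w) :
    (attach u T' w).neighborSet x.1 = Subtype.val '' T'.neighborSet x := by
  ext b
  simp only [mem_neighborSet, attach_adj, Set.mem_image]
  constructor
  · rintro (⟨x', y', h, hx, hy⟩ | ⟨h, _⟩ | ⟨h, rfl⟩)
    · exact ⟨y', by rwa [Subtype.val_injective hx] at h, hy⟩
    · exact absurd h x.2
    · exact absurd (Subtype.val_injective h) hxw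
  · rintro ⟨y, hy, rfl⟩
    exact Or.inl ⟨x, y, hy, rfl, rfl⟩

lemma attach_neighborSet_w :
    (attach u T' w).neighborSet w.1 = insert u (Subtype.val '' T'.neighborSet w) := by
  ext b
  simp only [mem_neighborSet, attach_adj, Set.mem_insert_iff, Set.mem_image]
  constructor
  · rintro (⟨x', y', h, hx, hy⟩ | ⟨h, _⟩ | ⟨_, rfl⟩)
    · exact Or.inr ⟨y', by rwa [Subtype.val_injective hx] at h, hy⟩
    · exact absurd h w.2
    · exact Or.inl rfl
  · rintro (rfl | ⟨y, hy, rfl⟩)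
    · tauto
    · exact Or.inl ⟨w, y, hy, rfl, rfl⟩

lemma attach_ncard_u : (((attach u T' w).neighborSet u)).ncard = 1 := by
  rw [attach_neighborSet_u, Set.ncard_singleton]

lemma attach_ncard_ne (x : {x : V // x ≠ u}) (hxw : x ≠ w) :
    ((attach u T' w).neighborSet x.1).ncard = (T'.neighborSet x).ncard := by
  rw [attach_neighborSet_ne x hxw, Set.ncard_image_of_injective _ Subtype.val_injective]

lemma attach_ncard_w [Fintype V] :
    ((attach u T' w).neighborSet w.1).ncard = (T'.neighborSet w).ncard + 1 := by
  rw [attach_neighborSet_w, Set.ncard_insert_of_notMem (by rintro ⟨y, _, hy⟩; exact y.2 hy)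
    (Set.toFinite _), Set.ncard_image_of_injective _ Subtype.val_injective]

/-- The hom from `T'` into the attached graph. -/
def attachHom : T' →g attach u T' w where
  toFun := Subtype.val
  map_rel' := fun h => attach_adj.mpr (Or.inl ⟨_, _, h, rfl, rfl⟩)

lemma attach_isTree (hT' : T'.IsTree) : (attach u T' w).IsTree := by
  have hadjuw : (attach u T' w).Adj u w.1 := attach_adj.mpr (Or.inr (Or.inl ⟨rfl, rfl⟩))
  constructor
  · rw [connected_iff]
    refine ⟨?_, ⟨u⟩⟩
    have hu : ∀ a : V, (attach u T' w).Reachable u a := by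
      intro a
      by_cases ha : a = u
      · subst ha; rfl
      · obtain ⟨p⟩ := hT'.isConnected w ⟨a, ha⟩
        exact (Adj.reachable hadjuw).trans ⟨p.map (attachHom)⟩
    intro a b
    exact (hu a).symm.trans (hu b)
  · intro v c hc
    have husupp : u ∉ c.support := by
      refine not_mem_cycle_support_of_nbr_subsingleton (w := w.1) ?_ c hc
      rw [attach_neighborSet_u]
    have hv : v ≠ u := fun h => husupp (h ▸ c.start_mem_support)
    obtain ⟨q, hq⟩ := walk_lift (pred := (· ≠ u)) c
      (fun x hx hxu => husupp (hxu ▸ hx)) hv hv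
    have hinj : Function.Injective
        ⇑((Embedding.comap (Function.Embedding.subtype (· ≠ u)) (attach u T' w)).toHom) :=
      (Embedding.comap (Function.Embedding.subtype (· ≠ u)) (attach u T' w)).injective
    have hqc : q.IsCycle := (Walk.map_isCycle_iff_of_injective hinj).mp (by rw [hq]; exact hc)
    have hacyc : ((attach u T' w).comap (Function.Embedding.subtype (· ≠ u))).IsAcyclic := by
      rw [attach_comap]; exact hT'.IsAcyclic
    exact hacyc _ hqc

end Attach
end SimpleGraph

open SimpleGraph

lemma sigma_subtype_ext {ι : Type*} {α : Type*} {P : ι → α → Prop}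
    {x y : Σ i : ι, {a : α // P i a}} (h1 : x.1 = y.1) (h2 : x.2.1 = y.2.1) : x = y := by
  obtain ⟨i, a, ha⟩ := x
  obtain ⟨j, b, hb⟩ := y
  dsimp at h1 h2
  subst h1; subst h2
  rfl

lemma ncard_neighborSet_pos {V : Type*} [Fintype V] {G : SimpleGraph V}
    (hG : G.IsTree) [Nontrivial V] (v : V) : 1 ≤ (G.neighborSet v).ncard := by
  obtain ⟨w, hw⟩ := exists_adj_of_connected hG.isConnected v
  have : (G.neighborSet v).Nonempty := ⟨w, hw⟩
  have := Set.ncard_pos (Set.toFinite _) |>.mpr this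
  omega

lemma ncard_neighborSet_eq_degree {V : Type*} [Fintype V] {G : SimpleGraph V}
    [DecidableRel G.Adj] (v : V) : (G.neighborSet v).ncard = G.degree v := by
  rw [← card_neighborFinset_eq_degree, neighborFinset_def, Set.ncard_eq_toFinset_card']

lemma tree_sum_ncard {V : Type*} [Fintype V] {G : SimpleGraph V} (hG : G.IsTree) :
    ∑ v, (G.neighborSet v).ncard = 2 * (Fintype.card V - 1) := by
  classical
  have h1 : ∑ v, (G.neighborSet v).ncard = ∑ v, G.degree v := by
    exact Finset.sum_congr rfl fun v _ => ncard_neighborSet_eq_degree v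
  rw [h1, sum_degrees_eq_twice_card_edges, ← hG.card_edgeFinset]
  omega

lemma eq_of_card_two {V : Type*} [Fintype V] [DecidableEq V] (hV : Fintype.card V = 2)
    {a y z : V} (h1 : y ≠ a) (h2 : z ≠ a) : y = z := by
  by_contra h
  have hsub : ({a, y, z} : Finset V) ⊆ Finset.univ := Finset.subset_univ _
  have := Finset.card_le_card hsub
  rw [Finset.card_univ, hV] at this
  rw [Finset.card_insert_of_notMem (by simp [Ne.symm h1, Ne.symm h2]),
    Finset.card_insert_of_notMem (by simp [h])] at this
  simp at this

lemma cayley_core : ∀ (m : ℕ) (V : Type) [Fintype V] [DecidableEq V],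
    Fintype.card V = m + 2 → ∀ d : V → ℕ, (∀ v, 1 ≤ d v) → (∑ v, d v = 2 * (m + 1)) →
    Nat.card {T : SimpleGraph V // T.IsTree ∧ ∀ v, (T.neighborSet v).ncard = d v}
      = Nat.multinomial Finset.univ (fun v => d v - 1) := by
  intro m
  induction m with
  | zero =>
    intro V _ _ hV d hd1 hsum
    classical
    have hcard2 : Fintype.card V = 2 := hV
    have hnt : Nontrivial V := Fintype.one_lt_card_iff_nontrivial.mp (by omega)
    have hd : ∀ v, d v = 1 := by
      intro v
      have h1 := Finset.add_sum_erase Finset.univ d (Finset.mem_univ v)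
      have h2 : (Finset.univ.erase v).card • 1 ≤ ∑ x ∈ Finset.univ.erase v, d x :=
        Finset.card_nsmul_le_sum _ _ _ (fun x _ => hd1 x)
      have h3 : (Finset.univ.erase v).card = 1 := by
        rw [Finset.card_erase_of_mem (Finset.mem_univ v), Finset.card_univ, hcard2]
      rw [h3] at h2
      simp only [smul_eq_mul, one_mul] at h2
      have := hd1 v
      omega
    have hmul : Nat.multinomial Finset.univ (fun v => d v - 1) = 1 := by
      have heq : (fun v => d v - 1) = fun _ : V => 0 := funext fun v => by rw [hd v]
      rw [heq]
      simp [Nat.multinomial]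
    rw [hmul, Nat.card_eq_one_iff_unique]
    have htop : ∀ T : SimpleGraph V, T.IsTree → T = ⊤ := by
      intro T hT
      ext a b
      simp only [top_adj]
      constructor
      · exact Adj.ne
      · intro hab
        obtain ⟨p⟩ := hT.isConnected a b
        have hnil : ¬ p.Nil := Walk.not_nil_of_ne hab
        have hadj : T.Adj a (p.getVert 1) := Walk.adj_snd hnil
        have h1 : p.getVert 1 = b := eq_of_card_two hcard2 hadj.ne' (Ne.symm hab)
        rwa [h1] at hadj
    refine ⟨⟨fun T S => Subtype.ext ((htop T.1 T.2.1).trans (htop S.1 S.2.1).symm)⟩, ⟨⊤, ⟨?_, ?_⟩, ?_⟩⟩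
    · exact connected_top
    · intro v c hc
      have h3 := hc.three_le_length
      have hnodup := ((Walk.isCycle_def c).mp hc).2.2
      have hlen := List.Nodup.length_le_card hnodup
      have h4 : c.support.tail.length = c.length := by
        rw [List.length_tail, Walk.length_support]
        omega
      omega
    · intro v
      obtain ⟨b, hb⟩ := exists_ne v
      have hN : (⊤ : SimpleGraph V).neighborSet v = {b} := by
        ext w
        simp only [mem_neighborSet, top_adj, Set.mem_singleton_iff]
        constructor
        · intro hw; exact eq_of_card_two hcard2 (Ne.symm hw) hb
        · rintro rfl; exact Ne.symm hb
      rw [hN, Set.ncard_singleton, hd v]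
  | succ m ih =>
    intro V _ _ hV d hd1 hsum
    classical
    have hex : ∃ u, d u = 1 := by
      by_contra h
      push_neg at h
      have h2 : ∀ v ∈ Finset.univ, 2 ≤ d v := fun v _ => by
        have h3 := hd1 v; have h4 := h v; omega
      have h5 := Finset.card_nsmul_le_sum Finset.univ d 2 h2
      rw [Finset.card_univ, hV] at h5
      simp only [smul_eq_mul] at h5
      have h6 : Finset.univ.sum d = ∑ v, d v := rfl
      omega
    obtain ⟨u, hdu⟩ := hex
    have hcardV' : Fintype.card {x : V // x ≠ u} = m + 2 := by
      have h1 : Fintype.card {x : V // ¬ (x = u)} = Fintype.card V - Fintype.card {x : V // x = u} :=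
        Fintype.card_subtype_compl _
      rw [Fintype.card_subtype_eq] at h1
      have : Fintype.card {x : V // x ≠ u} = Fintype.card {x : V // ¬ (x = u)} := rfl
      omega
    have hntV' : Nontrivial {x : V // x ≠ u} := by
      apply Fintype.one_lt_card_iff_nontrivial.mp
      omega
    -- the attachment map
    have hcard : Nat.card {T : SimpleGraph V // T.IsTree ∧ ∀ v, (T.neighborSet v).ncard = d v}
        = ∑ w : {x : V // x ≠ u}, Nat.card {T' : SimpleGraph {x : V // x ≠ u} //
            T'.IsTree ∧ ∀ x, (T'.neighborSet x).ncard = d x.1 - if x = w then 1 else 0} := by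
      have hFtree : ∀ (w : {x : V // x ≠ u}) (T' : SimpleGraph {x : V // x ≠ u}),
          T'.IsTree → (∀ x, (T'.neighborSet x).ncard = d x.1 - if x = w then 1 else 0) →
          (attach u T' w).IsTree ∧ ∀ v, ((attach u T' w).neighborSet v).ncard = d v := by
        intro w T' ht hdeg
        refine ⟨attach_isTree ht, ?_⟩
        intro v
        by_cases hv : v = u
        · subst hv; rw [attach_ncard_u, hdu]
        · by_cases hvw : v = w.1
          · subst hvw
            rw [attach_ncard_w, hdeg w, if_pos rfl]
            have := hd1 w.1; omega
          · have hx : (⟨v, hv⟩ : {x : V // x ≠ u}) ≠ w := fun h => hvw (congrArg Subtype.val h)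
            have h14 : ((attach u T' w).neighborSet v).ncard = (T'.neighborSet ⟨v, hv⟩).ncard :=
              attach_ncard_ne ⟨v, hv⟩ hx
            rw [h14, hdeg ⟨v, hv⟩, if_neg hx]
            simp
      let F : (Σ w : {x : V // x ≠ u}, {T' : SimpleGraph {x : V // x ≠ u} //
            T'.IsTree ∧ ∀ x, (T'.neighborSet x).ncard = d x.1 - if x = w then 1 else 0}) →
          {T : SimpleGraph V // T.IsTree ∧ ∀ v, (T.neighborSet v).ncard = d v} :=
        fun p => ⟨attach u p.2.1 p.1, hFtree p.1 p.2.1 p.2.2.1 p.2.2.2⟩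
      have hbij : Function.Bijective F := by
        constructor
        · intro p q hpq
          have hgr : attach u p.2.1 p.1 = attach u q.2.1 q.1 := congrArg Subtype.val hpq
          have h1 : p.1 = q.1 := by
            have h2 := congrArg (fun G => SimpleGraph.neighborSet G u) hgr
            simp only [attach_neighborSet_u] at h2
            exact Subtype.ext (Set.singleton_eq_singleton_iff.mp h2)
          refine sigma_subtype_ext h1 ?_
          have h2 := congrArg (fun G => SimpleGraph.comap (Function.Embedding.subtype (· ≠ u)) G) hgr
          simp only [attach_comap] at h2
          exact h2
        · rintro ⟨T, hT, hdeg⟩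
          have h1 : (T.neighborSet u).ncard = 1 := by rw [hdeg u, hdu]
          obtain ⟨w0, hw0⟩ := Set.ncard_eq_one.mp h1
          have hadj : T.Adj u w0 := by rw [← mem_neighborSet, hw0]; rfl
          refine ⟨⟨⟨w0, hadj.ne'⟩, ⟨T.comap (Function.Embedding.subtype (· ≠ u)),
            isTree_comap_of_leaf hT hw0, ?_⟩⟩, ?_⟩
          · intro x
            rw [ncard_comap_subtype_neighborSet]
            by_cases hxw : x = ⟨w0, hadj.ne'⟩
            · subst hxw
              have hmem : u ∈ T.neighborSet w0 := hadj.symm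
              rw [Set.ncard_diff_singleton_of_mem hmem, hdeg w0, if_pos rfl]
            · have hnm : u ∉ T.neighborSet x.1 := by
                intro hm
                apply hxw
                apply Subtype.ext
                have h15 : T.Adj x.1 u := hm
                have h16 : x.1 ∈ T.neighborSet u := h15.symm
                rw [hw0] at h16
                exact h16
              rw [Set.diff_singleton_eq_self hnm, hdeg x.1, if_neg hxw]
              omega
          · apply Subtype.ext
            show attach u (T.comap (Function.Embedding.subtype (· ≠ u))) ⟨w0, hadj.ne'⟩ = T
            ext a b
            rw [attach_adj]
            constructor
            · rintro (⟨x, y, hxy, rfl, rfl⟩ | ⟨rfl, rfl⟩ | ⟨rfl, rfl⟩)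
              · exact hxy
              · exact hadj
              · exact hadj.symm
            · intro h
              by_cases ha : a = u
              · have h17 : b ∈ T.neighborSet u := by rw [← ha]; exact h
                rw [hw0] at h17
                exact Or.inr (Or.inl ⟨ha, h17⟩)
              · by_cases hb : b = u
                · have h18 : a ∈ T.neighborSet u := by rw [← hb]; exact h.symm
                  rw [hw0] at h18
                  exact Or.inr (Or.inr ⟨h18, hb⟩)
                · exact Or.inl ⟨⟨a, ha⟩, ⟨b, hb⟩, h, rfl, rfl⟩
      rw [← Nat.card_eq_of_bijective F hbij, Nat.card_eq_fintype_card, Fintype.card_sigma]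
      exact Finset.sum_congr rfl fun w _ => (Nat.card_eq_fintype_card).symm
    rw [hcard]
    -- evaluate fibers
    have hfib : ∀ w : {x : V // x ≠ u}, Nat.card {T' : SimpleGraph {x : V // x ≠ u} //
            T'.IsTree ∧ ∀ x, (T'.neighborSet x).ncard = d x.1 - if x = w then 1 else 0}
        = if 2 ≤ d w.1 then Nat.multinomial Finset.univ
            (fun v => (d v - 1) - if v = w.1 then 1 else 0) else 0 := by
      intro w
      by_cases hw : 2 ≤ d w.1
      · rw [if_pos hw]
        have hd1' : ∀ x : {x : V // x ≠ u}, 1 ≤ d x.1 - (if x = w then 1 else 0) := by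
          intro x
          by_cases hx : x = w
          · subst hx; rw [if_pos rfl]; omega
          · rw [if_neg hx]; have := hd1 x.1; omega
        have hsub : ∑ x : {x : V // x ≠ u}, d x.1 = (∑ v, d v) - d u := by
          have h8 : ∑ x : {x : V // x ≠ u}, d x.1 = ∑ v ∈ Finset.univ.erase u, d v :=
            (Finset.sum_subtype (p := fun x => x ≠ u) _ (by simp) d).symm
          have h9 := Finset.add_sum_erase Finset.univ d (Finset.mem_univ u)
          omega
        have hsum' : ∑ x : {x : V // x ≠ u}, (d x.1 - if x = w then 1 else 0) = 2 * (m + 1) := by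
          have h10 : ∑ y : {x : V // x ≠ u}, d y.1
              = ∑ y : {x : V // x ≠ u}, ((d y.1 - if y = w then 1 else 0)
                + if y = w then 1 else 0) := by
            refine Finset.sum_congr rfl fun y _ => ?_
            by_cases hy : y = w
            · simp only [hy, if_pos]
              omega
            · simp only [if_neg hy]
              omega
          rw [Finset.sum_add_distrib, Finset.sum_ite_eq' Finset.univ w (fun _ => 1)] at h10
          rw [if_pos (Finset.mem_univ w)] at h10
          omega
        have hih := ih {x : V // x ≠ u} hcardV' _ hd1' hsum'
        rw [hih]
        have hfun : (fun x : {x : V // x ≠ u} => (d x.1 - if x = w then 1 else 0) - 1)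
            = fun x : {x : V // x ≠ u} => ((fun v => (d v - 1) - if v = w.1 then 1 else 0) x.1) := by
          funext x
          simp only
          by_cases hx : x = w
          · subst hx; rw [if_pos rfl, if_pos rfl]
          · rw [if_neg hx, if_neg (fun h => hx (Subtype.ext h))]
            omega
        rw [hfun]
        exact multinomial_subtype_ne u (fun v => (d v - 1) - if v = w.1 then 1 else 0)
          (by simp [hdu])
      · rw [if_neg hw]
        rw [Nat.card_eq_zero]
        left
        constructor
        intro T'
        have h11 := T'.2.2 w
        have h12 : d w.1 = 1 := by have := hd1 w.1; omega
        rw [if_pos rfl, h12] at h11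
        have h13 := ncard_neighborSet_pos T'.2.1 w
        omega
    rw [Finset.sum_congr rfl (fun w _ => hfib w)]
    -- apply the multinomial recurrence
    have hsplit : ∑ v, d v = (∑ v, (d v - 1)) + Fintype.card V := by
      have h7 : ∑ v, d v = ∑ v : V, ((d v - 1) + 1) :=
        Finset.sum_congr rfl (fun v _ => by have := hd1 v; omega)
      rw [h7, Finset.sum_add_distrib, Finset.sum_const, Finset.card_univ, smul_eq_mul, mul_one]
    have hs : 1 ≤ ∑ v, ((fun v => d v - 1) v) := by
      simp only
      omega
    rw [multinomial_recurrence Finset.univ (fun v => d v - 1) hs]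
    have hcond : ∀ w : V, (if 1 ≤ d w - 1 then Nat.multinomial Finset.univ
          (fun v => (fun v => d v - 1) v - if v = w then 1 else 0) else 0)
        = if 2 ≤ d w then Nat.multinomial Finset.univ
            (fun v => (d v - 1) - if v = w then 1 else 0) else 0 := by
      intro w
      have h6 := hd1 w
      by_cases h : 2 ≤ d w
      · rw [if_pos (by omega), if_pos h]
      · rw [if_neg (by omega), if_neg h]
    rw [Finset.sum_congr rfl (fun w _ => hcond w)]
    rw [← Finset.add_sum_erase Finset.univ _ (Finset.mem_univ u), if_neg (by omega), zero_add]
    exact (Finset.sum_subtype (p := fun x => x ≠ u) (Finset.univ.erase u) (by simp)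
      (fun w => if 2 ≤ d w then Nat.multinomial Finset.univ
        (fun v => (d v - 1) - if v = w then 1 else 0) else 0)).symm

open MvPolynomial Finset

/- **Multivariate Cayley formula.** For `n ≥ 1`,
`(x₁ + ⋯ + x_{n+1})^{n-1}` equals the sum over all labeled trees on the vertex
set `{1, …, n+1}` of `∏_v x_v^(deg(v) - 1)`. -/
open scoped Classical in
theorem cayley_formula (n : ℕ) (hn : 0 < n) :
    (∑ i : Fin (n + 1), X i : MvPolynomial (Fin (n + 1)) ℚ) ^ (n - 1) =
      ∑ T : {G : SimpleGraph (Fin (n + 1)) // G.IsTree},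
        ∏ v : Fin (n + 1), X v ^ ((T.1.neighborSet v).ncard - 1) := by
  classical
  have hcardV : Fintype.card (Fin (n + 1)) = n + 1 := Fintype.card_fin _
  haveI hnt : Nontrivial (Fin (n + 1)) := by
    apply Fintype.one_lt_card_iff_nontrivial.mp
    omega
  -- sum of degrees minus one for a tree
  have hdegsum : ∀ T : {G : SimpleGraph (Fin (n + 1)) // G.IsTree},
      ∑ v, ((T.1.neighborSet v).ncard - 1) = n - 1 := by
    intro T
    have h2n := tree_sum_ncard T.2
    rw [hcardV] at h2n
    have hsplit : ∑ v, (T.1.neighborSet v).ncard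
        = ∑ v, ((T.1.neighborSet v).ncard - 1) + Fintype.card (Fin (n + 1)) := by
      have h7 : ∑ v, (T.1.neighborSet v).ncard
          = ∑ v, (((T.1.neighborSet v).ncard - 1) + 1) :=
        Finset.sum_congr rfl (fun v _ => by have := ncard_neighborSet_pos T.2 v; omega)
      rw [h7, Finset.sum_add_distrib, Finset.sum_const, Finset.card_univ, smul_eq_mul, mul_one]
    rw [hcardV] at hsplit
    omega
  rw [Finset.sum_pow_eq_sum_piAntidiag Finset.univ
    (fun i => (X i : MvPolynomial (Fin (n + 1)) ℚ)) (n - 1)]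
  rw [← Finset.sum_fiberwise_of_maps_to
    (g := fun T : {G : SimpleGraph (Fin (n + 1)) // G.IsTree} =>
      (fun v => (T.1.neighborSet v).ncard - 1))
    (t := Finset.piAntidiag Finset.univ (n - 1))
    (fun T _ => by
      rw [Finset.mem_piAntidiag]
      exact ⟨hdegsum T, fun i _ => Finset.mem_univ i⟩)
    (fun T => ∏ v, (X v : MvPolynomial (Fin (n + 1)) ℚ) ^ ((T.1.neighborSet v).ncard - 1))]
  refine Finset.sum_congr rfl fun k hk => ?_
  have hksum : ∑ v, k v = n - 1 := (Finset.mem_piAntidiag.mp hk).1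
  have hinner : ∑ T ∈ Finset.univ.filter
        (fun T : {G : SimpleGraph (Fin (n + 1)) // G.IsTree} =>
          (fun v => (T.1.neighborSet v).ncard - 1) = k),
        ∏ v, (X v : MvPolynomial (Fin (n + 1)) ℚ) ^ ((T.1.neighborSet v).ncard - 1)
      = (Finset.univ.filter
        (fun T : {G : SimpleGraph (Fin (n + 1)) // G.IsTree} =>
          (fun v => (T.1.neighborSet v).ncard - 1) = k)).card
        • ∏ v, (X v : MvPolynomial (Fin (n + 1)) ℚ) ^ (k v) := by
    rw [Finset.sum_congr rfl (fun T hT => ?_), Finset.sum_const]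
    have hTk := (Finset.mem_filter.mp hT).2
    exact Finset.prod_congr rfl fun v _ => by rw [congrFun hTk v]
  rw [hinner, nsmul_eq_mul]
  congr 1
  have hE : {T : {G : SimpleGraph (Fin (n + 1)) // G.IsTree} //
        (fun v => (T.1.neighborSet v).ncard - 1) = k}
      ≃ {T : SimpleGraph (Fin (n + 1)) //
        T.IsTree ∧ ∀ v, (T.neighborSet v).ncard = k v + 1} :=
    { toFun := fun T => ⟨T.1.1, T.1.2, fun v => by
        have h := congrFun T.2 v
        have hpos := ncard_neighborSet_pos T.1.2 v
        omega⟩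
      invFun := fun T => ⟨⟨T.1, T.2.1⟩, funext fun v => by
        rw [T.2.2 v]; omega⟩
      left_inv := fun T => Subtype.ext (Subtype.ext rfl)
      right_inv := fun T => Subtype.ext rfl }
  have hcount : (Finset.univ.filter
        (fun T : {G : SimpleGraph (Fin (n + 1)) // G.IsTree} =>
          (fun v => (T.1.neighborSet v).ncard - 1) = k)).card
      = Nat.multinomial Finset.univ k := by
    have h1 : (Finset.univ.filter
        (fun T : {G : SimpleGraph (Fin (n + 1)) // G.IsTree} =>
          (fun v => (T.1.neighborSet v).ncard - 1) = k)).card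
        = Nat.card {T : {G : SimpleGraph (Fin (n + 1)) // G.IsTree} //
          (fun v => (T.1.neighborSet v).ncard - 1) = k} := by
      rw [Nat.card_eq_fintype_card, Fintype.card_subtype]
    rw [h1, Nat.card_congr hE]
    have h2 := cayley_core (n - 1) (Fin (n + 1)) (by rw [hcardV]; omega)
      (fun v => k v + 1) (fun v => Nat.le_add_left 1 (k v))
      (by
        rw [Finset.sum_add_distrib, hksum, Finset.sum_const, Finset.card_univ, hcardV,
          smul_eq_mul, mul_one]
        omega)
    rw [h2]
    simp
  rw [hcount]
end

section
/- For any positive integer n and indeterminates x_1,...,x_{n+1}, the rooted Cayley formula holds: (x_1+...+x_{n+1})^{n} equals the sum over all rooted labeled trees T on vertex set {1,...,n+1} of x_{r}^{deg(r)} times the product over non-root vertices v of x_v^{deg(v)-1}, where r is the root of T. -/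
open MvPolynomial Finset

open scoped Classical
set_option linter.unusedSectionVars false

variable {V : Type*} [Fintype V] [DecidableEq V]

/-- Functions fixing everything outside `A`, mapping `A` into `C`, whose iterates escape `A`. -/
noncomputable def CPSet (A C : Finset V) : Finset (V → V) :=
  Finset.univ.filter fun p => (∀ u, u ∉ A → p u = u) ∧ (∀ u ∈ A, p u ∈ C) ∧
    ∀ u ∈ A, ∃ k, p^[k] u ∉ A

lemma mem_CPSet {A C : Finset V} {p : V → V} :
    p ∈ CPSet A C ↔ (∀ u, u ∉ A → p u = u) ∧ (∀ u ∈ A, p u ∈ C) ∧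
      ∀ u ∈ A, ∃ k, p^[k] u ∉ A := by
  simp [CPSet]

lemma iter_stuck {p : V → V} {A : Finset V} (hid : ∀ u, u ∉ A → p u = u) {u : V} {j : ℕ}
    (hj : p^[j] u ∉ A) : ∀ d, p^[j + d] u = p^[j] u := by
  intro d
  induction d with
  | zero => rfl
  | succ d ih =>
      rw [← Nat.add_assoc, Function.iterate_succ_apply', ih, hid _ hj]

lemma no_iter_cycle {p : V → V} {A : Finset V} (hid : ∀ u, u ∉ A → p u = u)
    (hesc : ∀ u ∈ A, ∃ k, p^[k] u ∉ A) {u : V} (hu : u ∈ A) {m : ℕ} (hm : 0 < m)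
    (h : p^[m] u = u) : False := by
  have per : ∀ t, p^[m * t] u = u := by
    intro t
    induction t with
    | zero => rfl
    | succ t ih =>
        have : m * (t + 1) = m * t + m := by ring
        rw [this, Function.iterate_add_apply, h, ih]
  obtain ⟨k, hk⟩ := hesc u hu
  have hle : k ≤ m * k := Nat.le_mul_of_pos_left k hm
  obtain ⟨d, hd⟩ := Nat.exists_eq_add_of_le hle
  have := iter_stuck hid hk d
  rw [← hd, per k] at this
  rw [this] at hu
  exact hk hu

lemma iter_agree {p q : V → V} {S : Finset V} (h : ∀ v ∈ S, p v = q v) :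
    ∀ (k : ℕ) (u : V), (∀ i < k, p^[i] u ∈ S) → q^[k] u = p^[k] u := by
  intro k
  induction k with
  | zero => intro u _; rfl
  | succ k ih =>
      intro u hu
      rw [Function.iterate_succ_apply', Function.iterate_succ_apply',
        ih u (fun i hi => hu i (Nat.lt_succ_of_lt hi)),
        ← h _ (hu k (Nat.lt_succ_self k))]

/-- If iterates of `u ∈ A` escape `A`, there is some element of `A` mapping out of `A`. -/
lemma exists_exit {p : V → V} {A : Finset V} {k : ℕ} :
    ∀ u ∈ A, p^[k] u ∉ A → ∃ w ∈ A, p w ∉ A := by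
  induction k with
  | zero => intro u hu h; exact absurd hu h
  | succ k ih =>
      intro u hu h
      by_cases hpu : p u ∈ A
      · exact ih (p u) hpu (by rwa [← Function.iterate_succ_apply])
      · exact ⟨u, hu, hpu⟩

noncomputable def CFSet (B D : Finset V) : Finset (V → V) :=
  Finset.univ.filter fun f => (∀ u, u ∉ B → f u = u) ∧ ∀ u ∈ B, f u ∈ D

lemma mem_CFSet {B D : Finset V} {f : V → V} :
    f ∈ CFSet B D ↔ (∀ u, u ∉ B → f u = u) ∧ ∀ u ∈ B, f u ∈ D := by simp [CFSet]

lemma FSum (B D : Finset V) :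
    ∑ f ∈ CFSet B D, ∏ u ∈ B, (X (f u) : MvPolynomial V ℚ) = (∑ v ∈ D, X v) ^ B.card := by
  classical
  induction B using Finset.induction_on with
  | empty =>
      have : CFSet (∅ : Finset V) D = {id} := by
        ext f
        simp [mem_CFSet, funext_iff]
      rw [this]
      simp
  | @insert a B ha ih =>
      rw [Finset.card_insert_of_notMem ha]
      have key : ∑ f ∈ CFSet (insert a B) D, ∏ u ∈ insert a B, (X (f u) : MvPolynomial V ℚ)
          = ∑ q ∈ D ×ˢ CFSet B D, (X q.1 : MvPolynomial V ℚ) * ∏ u ∈ B, X (q.2 u) := by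
        refine Finset.sum_bij' (fun f _ => (f a, fun u => if u = a then u else f u))
          (fun q _ => fun u => if u = a then q.1 else q.2 u) ?_ ?_ ?_ ?_ ?_
        · intro f hf
          rw [mem_CFSet] at hf
          rw [Finset.mem_product]
          constructor
          · exact hf.2 a (Finset.mem_insert_self a B)
          · rw [mem_CFSet]
            refine ⟨fun u hu => ?_, fun u hu => ?_⟩
            · by_cases h : u = a
              · simp [h]
              · simp only [if_neg h]
                exact hf.1 u (by simp [h, hu])
            · have hua : u ≠ a := fun h => ha (h ▸ hu)
              simp only [if_neg hua]
              exact hf.2 u (Finset.mem_insert_of_mem hu)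
        · intro q hq
          rw [Finset.mem_product] at hq
          rw [mem_CFSet]
          refine ⟨fun u hu => ?_, fun u hu => ?_⟩
          · have hua : u ≠ a := fun h => hu (h ▸ Finset.mem_insert_self a B)
            simp only [if_neg hua]
            exact (mem_CFSet.mp hq.2).1 u (fun h => hu (Finset.mem_insert_of_mem h))
          · rcases Finset.mem_insert.mp hu with h | h
            · simp [h, hq.1]
            · have hua : u ≠ a := fun he => ha (he ▸ h)
              simp only [if_neg hua]
              exact (mem_CFSet.mp hq.2).2 u h
        · intro f hf
          funext u
          by_cases h : u = a
          · simp [h]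
          · simp [h]
        · intro q hq
          rw [Finset.mem_product] at hq
          ext u
          · simp
          · by_cases h : u = a
            · subst h
              simp [(mem_CFSet.mp hq.2).1 u ha]
            · simp [h]
        · intro f hf
          rw [Finset.prod_insert ha]
          congr 1
          refine Finset.prod_congr rfl fun u hu => ?_
          have hua : u ≠ a := fun he => ha (he ▸ hu)
          simp [hua]
      rw [key, Finset.sum_product, pow_succ, mul_comm ((∑ v ∈ D, (X v : MvPolynomial V ℚ)) ^ B.card)]
      rw [← ih]
      rw [Finset.sum_mul]
      refine Finset.sum_congr rfl fun v hv => ?_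
      rw [Finset.mul_sum]

noncomputable def CHSum (A C : Finset V) : MvPolynomial V ℚ :=
  ∑ p ∈ CPSet A C, ∏ u ∈ A, X (p u)

lemma CPSet_empty (C : Finset V) : CPSet (∅ : Finset V) C = {id} := by
  ext p
  simp [mem_CPSet, funext_iff]

lemma CHSum_empty (C : Finset V) : CHSum (∅ : Finset V) C = 1 := by
  rw [CHSum, CPSet_empty]
  simp
lemma combined_escape {p q : V → V} {A B : Finset V}
    (hpB : ∀ u ∈ B, p u ∉ A)
    (hagree : ∀ u ∈ A \ B, q u = p u)
    (hq2 : ∀ u ∈ A \ B, ∃ k, q^[k] u ∉ A \ B) :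
    ∀ u ∈ A, ∃ k, p^[k] u ∉ A := by
  intro u hu
  by_cases h : u ∈ B
  · exact ⟨1, by simpa using hpB u h⟩
  · have huAB : u ∈ A \ B := Finset.mem_sdiff.mpr ⟨hu, h⟩
    have hesc2 := hq2 u huAB
    set k := Nat.find hesc2 with hk
    have hiter : p^[k] u = q^[k] u :=
      iter_agree hagree k u (fun i hi => by simpa using Nat.find_min hesc2 hi)
    have hit : q^[k] u ∉ A \ B := Nat.find_spec hesc2
    by_cases h2 : q^[k] u ∈ A
    · have h3 : q^[k] u ∈ B := by
        by_contra h4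
        exact hit (Finset.mem_sdiff.mpr ⟨h2, h4⟩)
      refine ⟨k + 1, ?_⟩
      rw [Function.iterate_succ_apply', hiter]
      exact hpB _ h3
    · exact ⟨k, by rwa [hiter]⟩

lemma restricted_escape {p q : V → V} {A B : Finset V}
    (hagree : ∀ u ∈ A \ B, p u = q u)
    (hp : ∀ u ∈ A, ∃ k, p^[k] u ∉ A) :
    ∀ u ∈ A \ B, ∃ k, q^[k] u ∉ A \ B := by
  intro u hu
  have hesc2 : ∃ k, p^[k] u ∉ A \ B :=
    (hp u (Finset.mem_sdiff.mp hu).1).imp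
      (fun k hk h => hk (Finset.mem_sdiff.mp h).1)
  refine ⟨Nat.find hesc2, ?_⟩
  rw [iter_agree hagree (Nat.find hesc2) u
    (fun i hi => by simpa using Nat.find_min hesc2 hi)]
  exact Nat.find_spec hesc2

lemma fiber_eq (A C B : Finset V) (hAC : A ⊆ C) (hBA : B ⊆ A) :
    ∑ p ∈ (CPSet A C).filter (fun p => A.filter (fun u => p u ∉ A) = B), ∏ u ∈ A, (X (p u) : MvPolynomial V ℚ)
      = (∑ v ∈ C \ A, X v) ^ B.card * CHSum (A \ B) A := by
  classical
  rw [← FSum B (C \ A), CHSum, Finset.sum_mul_sum, ← Finset.sum_product']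
  refine Finset.sum_bij' (fun p _ => ((fun u => if u ∈ B then p u else u),
      (fun u => if u ∈ A \ B then p u else u)))
    (fun q _ => fun u => if u ∈ B then q.1 u else q.2 u) ?_ ?_ ?_ ?_ ?_
  · -- maps into product
    rintro p hp
    rw [Finset.mem_filter] at hp
    obtain ⟨hp, hfib⟩ := hp
    rw [mem_CPSet] at hp
    have hout : ∀ u ∈ A, (p u ∉ A ↔ u ∈ B) := by
      intro u hu
      constructor
      · intro h; rw [← hfib]; exact Finset.mem_filter.mpr ⟨hu, h⟩
      · intro h; rw [← hfib] at h; exact (Finset.mem_filter.mp h).2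
    rw [Finset.mem_product]
    constructor
    · rw [mem_CFSet]
      refine ⟨fun u hu => if_neg hu, fun u hu => ?_⟩
      show (if u ∈ B then p u else u) ∈ C \ A
      rw [if_pos hu, Finset.mem_sdiff]
      exact ⟨hp.2.1 u (hBA hu), (hout u (hBA hu)).mpr hu⟩
    · rw [mem_CPSet]
      refine ⟨fun u hu => if_neg hu, fun u hu => ?_, ?_⟩
      · show (if u ∈ A \ B then p u else u) ∈ A
        rw [if_pos hu]
        rw [Finset.mem_sdiff] at hu
        by_contra h
        exact hu.2 ((hout u hu.1).mp h)
      · exact restricted_escape (fun v hv => (if_pos hv).symm) hp.2.2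
  · -- j maps into fiber
    rintro ⟨f, q⟩ hq
    rw [Finset.mem_product] at hq
    obtain ⟨hf, hq'⟩ := hq
    rw [mem_CFSet] at hf
    rw [mem_CPSet] at hq'
    simp only at hf hq'
    rw [Finset.mem_filter, mem_CPSet]
    refine ⟨⟨?_, ?_, ?_⟩, ?_⟩
    · intro u hu
      have h1 : u ∉ B := fun h => hu (hBA h)
      have h2 : u ∉ A \ B := fun h => hu (Finset.mem_sdiff.mp h).1
      show (if u ∈ B then f u else q u) = u
      rw [if_neg h1]
      exact hq'.1 u h2
    · intro u hu
      show (if u ∈ B then f u else q u) ∈ C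
      by_cases h : u ∈ B
      · rw [if_pos h]
        exact (Finset.mem_sdiff.mp (hf.2 u h)).1
      · rw [if_neg h]
        exact hAC (hq'.2.1 u (Finset.mem_sdiff.mpr ⟨hu, h⟩))
    · refine combined_escape (p := fun u => if u ∈ B then f u else q u) (q := q)
        (fun u hu => ?_) (fun u hu => ?_) hq'.2.2
      · show (if u ∈ B then f u else q u) ∉ A
        rw [if_pos hu]
        exact (Finset.mem_sdiff.mp (hf.2 u hu)).2
      · show q u = if u ∈ B then f u else q u
        rw [if_neg (Finset.mem_sdiff.mp hu).2]
    · -- the fiber condition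
      ext u
      rw [Finset.mem_filter]
      constructor
      · rintro ⟨hu, hpu⟩
        by_contra h
        apply hpu
        show (if u ∈ B then f u else q u) ∈ A
        rw [if_neg h]
        exact hq'.2.1 u (Finset.mem_sdiff.mpr ⟨hu, h⟩)
      · intro h
        refine ⟨hBA h, ?_⟩
        show (if u ∈ B then f u else q u) ∉ A
        rw [if_pos h]
        exact (Finset.mem_sdiff.mp (hf.2 u h)).2
  · -- left inverse
    intro p hp
    rw [Finset.mem_filter] at hp
    obtain ⟨hp', hfib⟩ := hp
    rw [mem_CPSet] at hp'
    funext u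
    show (if u ∈ B then (if u ∈ B then p u else u) else (if u ∈ A \ B then p u else u)) = p u
    by_cases h : u ∈ B
    · rw [if_pos h, if_pos h]
    · rw [if_neg h]
      by_cases h2 : u ∈ A \ B
      · rw [if_pos h2]
      · rw [if_neg h2]
        have : u ∉ A := fun hu => h2 (Finset.mem_sdiff.mpr ⟨hu, h⟩)
        exact (hp'.1 u this).symm
  · -- right inverse
    rintro ⟨f, q⟩ hq
    rw [Finset.mem_product] at hq
    obtain ⟨hf, hq'⟩ := hq
    rw [mem_CFSet] at hf
    rw [mem_CPSet] at hq'
    simp only at hf hq'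
    have e1 : (fun u => if u ∈ B then (if u ∈ B then f u else q u) else u) = f := by
      funext u
      by_cases h : u ∈ B
      · rw [if_pos h, if_pos h]
      · rw [if_neg h]
        exact (hf.1 u h).symm
    have e2 : (fun u => if u ∈ A \ B then (if u ∈ B then f u else q u) else u) = q := by
      funext u
      by_cases h : u ∈ A \ B
      · rw [if_pos h, if_neg (Finset.mem_sdiff.mp h).2]
      · rw [if_neg h]
        exact (hq'.1 u h).symm
    show ((fun u => if u ∈ B then (if u ∈ B then f u else q u) else u),
      (fun u => if u ∈ A \ B then (if u ∈ B then f u else q u) else u)) = (f, q)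
    rw [e1, e2]
  · -- terms agree
    intro p hp
    rw [← Finset.prod_sdiff hBA, mul_comm]
    show _ = (∏ u ∈ B, (X ((fun u => if u ∈ B then p u else u) u) : MvPolynomial V ℚ)) *
      ∏ u ∈ A \ B, (X ((fun u => if u ∈ A \ B then p u else u) u) : MvPolynomial V ℚ)
    congr 1
    · exact Finset.prod_congr rfl fun u hu => by rw [show (fun u => if u ∈ B then p u else u) u = if u ∈ B then p u else u from rfl, if_pos hu]
    · exact Finset.prod_congr rfl fun u hu => by rw [show (fun u => if u ∈ A \ B then p u else u) u = if u ∈ A \ B then p u else u from rfl, if_pos hu]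
lemma step_decomp (A C : Finset V) (hAC : A ⊆ C) (hA : A.Nonempty) :
    CHSum A C = ∑ B ∈ A.powerset.filter (·.Nonempty),
      (∑ v ∈ C \ A, (X v : MvPolynomial V ℚ)) ^ B.card * CHSum (A \ B) A := by
  classical
  rw [CHSum]
  rw [← Finset.sum_fiberwise_of_maps_to (t := A.powerset.filter (·.Nonempty))
    (g := fun p => A.filter (fun u => p u ∉ A)) (fun p hp => ?_)]
  · refine Finset.sum_congr rfl fun B hB => ?_
    rw [Finset.mem_filter, Finset.mem_powerset] at hB
    exact fiber_eq A C B hAC hB.1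
  · rw [Finset.mem_filter, Finset.mem_powerset]
    refine ⟨Finset.filter_subset _ _, ?_⟩
    rw [mem_CPSet] at hp
    obtain ⟨u, hu⟩ := hA
    obtain ⟨k, hk⟩ := hp.2.2 u hu
    obtain ⟨w, hw, hw2⟩ := exists_exit u hu hk
    exact ⟨w, Finset.mem_filter.mpr ⟨hw, hw2⟩⟩

lemma sum_X_ne_zero {A : Finset V} (hA : A.Nonempty) :
    (∑ v ∈ A, X v : MvPolynomial V ℚ) ≠ 0 := by
  intro h
  have := congrArg (eval (fun _ => (1 : ℚ))) h
  simp only [map_sum, eval_X, map_zero, Finset.sum_const, nsmul_eq_mul, mul_one] at this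
  have hc : (A.card : ℚ) = 0 := this
  rw [Nat.cast_eq_zero, Finset.card_eq_zero] at hc
  exact hA.ne_empty hc

lemma subset_binom (s : Finset V) (w z : MvPolynomial V ℚ) :
    ∑ t ∈ s.powerset, w ^ t.card * z ^ (s.card - t.card) = (w + z) ^ s.card := by
  classical
  have := Finset.prod_add (fun _ : V => w) (fun _ : V => z) s
  simp only [Finset.prod_const] at this
  rw [this]
  refine Finset.sum_congr rfl fun t ht => ?_
  rw [Finset.card_sdiff_of_subset (Finset.mem_powerset.mp ht)]

lemma CHSum_eq : ∀ (N : ℕ) (A C : Finset V), A.card ≤ N → A ⊆ C → A.Nonempty →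
    CHSum A C = (∑ v ∈ C \ A, (X v : MvPolynomial V ℚ)) * (∑ v ∈ C, X v) ^ (A.card - 1) := by
  intro N
  induction N with
  | zero =>
      intro A C hN hAC hA
      exact absurd (Finset.card_pos.mpr hA) (by omega)
  | succ N ih =>
      intro A C hN hAC hA
      set w : MvPolynomial V ℚ := ∑ v ∈ C \ A, X v with hw
      set sA : MvPolynomial V ℚ := ∑ v ∈ A, X v with hsA
      set sC : MvPolynomial V ℚ := ∑ v ∈ C, X v with hsC
      have hws : w + sA = sC := Finset.sum_sdiff hAC
      set P := A.powerset.filter (·.Nonempty) with hP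
      -- the per-B identity
      have perB : ∀ B ∈ P, sA * CHSum (A \ B) A
          = (∑ v ∈ B, X v) * sA ^ (A.card - B.card) := by
        intro B hB
        rw [hP, Finset.mem_filter, Finset.mem_powerset] at hB
        obtain ⟨hBA, hBne⟩ := hB
        by_cases hAB : A \ B = ∅
        · have : B = A := subset_antisymm hBA (Finset.sdiff_eq_empty_iff_subset.mp hAB)
          subst this
          rw [hAB, CHSum_empty, Nat.sub_self, pow_zero]
        · have hABne : (A \ B).Nonempty := Finset.nonempty_iff_ne_empty.mpr hAB
          have hcard : (A \ B).card ≤ N := by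
            have h1 := Finset.card_sdiff_of_subset hBA
            have h2 := Finset.card_pos.mpr hBne
            have h3 := Finset.card_le_card hBA
            omega
          rw [ih (A \ B) A hcard Finset.sdiff_subset hABne,
            Finset.sdiff_sdiff_eq_self hBA, Finset.card_sdiff_of_subset hBA]
          have hge : 1 ≤ A.card - B.card := by
            have h2 := Finset.card_pos.mpr hABne
            rw [Finset.card_sdiff_of_subset hBA] at h2
            omega
          rw [← mul_assoc, mul_comm sA, mul_assoc, ← pow_succ']
          congr 2
          omega
      -- multiply the decomposition by sA
      have key : sA * CHSum A C = sA * (w * sC ^ (A.card - 1)) := by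
        rw [step_decomp A C hAC hA, Finset.mul_sum]
        have rw1 : ∀ B ∈ P, sA * (w ^ B.card * CHSum (A \ B) A)
            = ∑ v ∈ B, X v * (w ^ B.card * sA ^ (A.card - B.card)) := by
          intro B hB
          rw [mul_left_comm, perB B hB, Finset.sum_mul, Finset.mul_sum]
          refine Finset.sum_congr rfl fun v hv => ?_
          ring
        rw [Finset.sum_congr rfl rw1]
        -- exchange the order of summation
        have hBsubA : ∀ B ∈ P, B ⊆ A := fun B hB =>
          Finset.mem_powerset.mp (Finset.mem_filter.mp hB).1
        have exch : ∑ B ∈ P, ∑ v ∈ B, X v * (w ^ B.card * sA ^ (A.card - B.card))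
            = ∑ v ∈ A, ∑ B ∈ P.filter (v ∈ ·),
                X v * (w ^ B.card * sA ^ (A.card - B.card)) := by
          have e1 : ∀ B ∈ P, ∑ v ∈ B, (X v : MvPolynomial V ℚ) * (w ^ B.card * sA ^ (A.card - B.card))
              = ∑ v ∈ A, if v ∈ B then X v * (w ^ B.card * sA ^ (A.card - B.card)) else 0 := by
            intro B hB
            rw [Finset.sum_ite_mem, Finset.inter_comm, (Finset.inter_eq_left).mpr (hBsubA B hB)]
          rw [Finset.sum_congr rfl e1, Finset.sum_comm]
          refine Finset.sum_congr rfl fun v hv => ?_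
          simp only [Finset.sum_filter, hP]
        rw [exch]
        have inner : ∀ v ∈ A, ∑ B ∈ P.filter (v ∈ ·),
            (X v : MvPolynomial V ℚ) * (w ^ B.card * sA ^ (A.card - B.card))
            = X v * (w * sC ^ (A.card - 1)) := by
          intro v hv
          have bij : ∑ B ∈ P.filter (v ∈ ·),
              (X v : MvPolynomial V ℚ) * (w ^ B.card * sA ^ (A.card - B.card))
              = ∑ B' ∈ (A.erase v).powerset,
                X v * (w ^ (B'.card + 1) * sA ^ (A.card - (B'.card + 1))) := by
            refine Finset.sum_bij' (fun B _ => B.erase v) (fun B' _ => insert v B') ?_ ?_ ?_ ?_ ?_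
            · intro B hB
              rw [Finset.mem_filter] at hB
              rw [Finset.mem_powerset]
              exact Finset.erase_subset_erase v (hBsubA B hB.1)
            · intro B' hB'
              rw [Finset.mem_powerset] at hB'
              rw [Finset.mem_filter, hP, Finset.mem_filter, Finset.mem_powerset]
              exact ⟨⟨Finset.insert_subset hv (hB'.trans (Finset.erase_subset v A)),
                Finset.insert_nonempty v B'⟩, Finset.mem_insert_self v B'⟩
            · intro B hB
              rw [Finset.mem_filter] at hB
              exact Finset.insert_erase hB.2
            · intro B' hB'
              rw [Finset.mem_powerset] at hB'
              refine Finset.erase_insert (fun hvB' => ?_)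
              exact (Finset.mem_erase.mp (hB' hvB')).1 rfl
            · intro B hB
              rw [Finset.mem_filter] at hB
              rw [Finset.card_erase_add_one hB.2]
          rw [bij]
          have ecard : (A.erase v).card = A.card - 1 := Finset.card_erase_of_mem hv
          have e2 : ∀ B' ∈ (A.erase v).powerset,
              (X v : MvPolynomial V ℚ) * (w ^ (B'.card + 1) * sA ^ (A.card - (B'.card + 1)))
              = (X v * w) * (w ^ B'.card * sA ^ ((A.erase v).card - B'.card)) := by
            intro B' hB'
            have : A.card - (B'.card + 1) = (A.erase v).card - B'.card := by
              rw [ecard]; omega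
            rw [this, pow_succ]
            ring
          rw [Finset.sum_congr rfl e2, ← Finset.mul_sum, subset_binom, hws, ecard, mul_assoc]
        rw [Finset.sum_congr rfl inner, ← Finset.sum_mul]
      exact mul_left_cancel₀ (sum_X_ne_zero hA) key
section Graph

open SimpleGraph

variable {V : Type*} [Fintype V] [DecidableEq V]

/-- The graph associated to a parent function. -/
noncomputable def parGraph (p : V → V) (r : V) : SimpleGraph V :=
  SimpleGraph.fromRel (fun u v => u ≠ r ∧ p u = v)

lemma mem_CPSet_root {p : V → V} {r : V} (hp : p ∈ CPSet (Finset.univ.erase r) Finset.univ) :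
    (∀ u, u ≠ r → u ∈ Finset.univ.erase r) ∧ p r = r ∧
      ∀ u, u ≠ r → ∃ k, p^[k] u = r := by
  rw [mem_CPSet] at hp
  have hmem : ∀ u : V, u ≠ r → u ∈ Finset.univ.erase r := fun u hu =>
    Finset.mem_erase.mpr ⟨hu, Finset.mem_univ u⟩
  refine ⟨hmem, hp.1 r (fun h => (Finset.mem_erase.mp h).1 rfl), fun u hu => ?_⟩
  obtain ⟨k, hk⟩ := hp.2.2 u (hmem u hu)
  refine ⟨k, ?_⟩
  by_contra h
  exact hk (Finset.mem_erase.mpr ⟨h, Finset.mem_univ _⟩)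

lemma p_iter_ne {p : V → V} {r : V} (hp : p ∈ CPSet (Finset.univ.erase r) Finset.univ)
    {u : V} (hu : u ≠ r) {m : ℕ} (hm : 0 < m) (h : p^[m] u = u) : False := by
  rw [mem_CPSet] at hp
  exact no_iter_cycle hp.1 hp.2.2 (Finset.mem_erase.mpr ⟨hu, Finset.mem_univ u⟩) hm h

lemma parGraph_adj {p : V → V} {r : V} (hp : p ∈ CPSet (Finset.univ.erase r) Finset.univ)
    {u w : V} : (parGraph p r).Adj u w ↔ ((u ≠ r ∧ p u = w) ∨ (w ≠ r ∧ p w = u)) := by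
  rw [parGraph, SimpleGraph.fromRel_adj]
  constructor
  · rintro ⟨-, h⟩; exact h
  · intro h
    refine ⟨?_, h⟩
    rintro rfl
    rcases h with ⟨hu, hpu⟩ | ⟨hu, hpu⟩ <;>
      exact p_iter_ne hp hu Nat.one_pos (by simpa using hpu)

lemma parGraph_reach {p : V → V} {r : V} (hp : p ∈ CPSet (Finset.univ.erase r) Finset.univ) :
    ∀ (k : ℕ) (v : V), p^[k] v = r → (parGraph p r).Reachable v r := by
  intro k
  induction k with
  | zero => intro v hv; subst hv; exact Reachable.refl _
  | succ k ih =>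
      intro v hv
      by_cases h : v = r
      · subst h; exact Reachable.refl _
      · have hadj : (parGraph p r).Adj v (p v) :=
          (parGraph_adj hp).mpr (Or.inl ⟨h, rfl⟩)
        exact hadj.reachable.trans (ih (p v) (by rwa [← Function.iterate_succ_apply]))

lemma below_edge {p : V → V} {r : V} (hp : p ∈ CPSet (Finset.univ.erase r) Finset.univ)
    {u w : V} (h : (parGraph p r).Adj u w) {v : V}
    (hne : s(u, w) ≠ s(v, p v)) : (∃ k, p^[k] u = v) ↔ (∃ k, p^[k] w = v) := by
  have main : ∀ u w : V, u ≠ r → p u = w → s(u, w) ≠ s(v, p v) →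
      ((∃ k, p^[k] u = v) ↔ (∃ k, p^[k] w = v)) := by
    intro u w hu hpu hne
    constructor
    · rintro ⟨k, hk⟩
      cases k with
      | zero =>
          simp only [Function.iterate_zero, id] at hk
          subst hk
          exact absurd (by rw [hpu]) hne
      | succ k =>
          rw [Function.iterate_succ_apply, hpu] at hk
          exact ⟨k, hk⟩
    · rintro ⟨k, hk⟩
      exact ⟨k + 1, by rwa [Function.iterate_succ_apply, hpu]⟩
  rcases (parGraph_adj hp).mp h with ⟨hu, hpu⟩ | ⟨hw, hpw⟩
  · exact main u w hu hpu hne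
  · exact (main w u hw hpw (by rwa [Sym2.eq_swap])).symm

lemma below_walk {p : V → V} {r : V} (hp : p ∈ CPSet (Finset.univ.erase r) Finset.univ)
    {v : V} : ∀ {a b : V} (W : (parGraph p r).Walk a b), s(v, p v) ∉ W.edges →
      ((∃ k, p^[k] a = v) ↔ (∃ k, p^[k] b = v)) := by
  intro a b W
  induction W with
  | nil => exact fun _ => Iff.rfl
  | cons h q ih =>
      intro hW
      rw [SimpleGraph.Walk.edges_cons, List.mem_cons]  at hW
      push_neg at hW
      exact (below_edge hp h (Ne.symm hW.1)).trans (ih hW.2)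

lemma parGraph_isTree {p : V → V} {r : V}
    (hp : p ∈ CPSet (Finset.univ.erase r) Finset.univ) : (parGraph p r).IsTree := by
  obtain ⟨hmem, hpr, hesc⟩ := mem_CPSet_root hp
  constructor
  · -- connected
    have : Nonempty V := ⟨r⟩
    refine ⟨fun a b => ?_⟩
    have ha : (parGraph p r).Reachable a r := by
      by_cases h : a = r
      · subst h; exact Reachable.refl _
      · obtain ⟨k, hk⟩ := hesc a h
        exact parGraph_reach hp k a hk
    have hb : (parGraph p r).Reachable b r := by
      by_cases h : b = r
      · subst h; exact Reachable.refl _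
      · obtain ⟨k, hk⟩ := hesc b h
        exact parGraph_reach hp k b hk
    exact ha.trans hb.symm
  · -- acyclic
    rw [isAcyclic_iff_forall_adj_isBridge]
    intro a b hadj
    rw [SimpleGraph.isBridge_iff_adj_and_forall_walk_mem_edges]
    refine fun W => ?_
    by_contra hne
    rcases (parGraph_adj hp).mp hadj with ⟨ha, hpa⟩ | ⟨hb, hpb⟩
    · have hSym : s(a, p a) ∉ W.edges := by rwa [hpa]
      obtain ⟨k, hk⟩ := (below_walk hp W hSym).mp ⟨0, rfl⟩
      exact p_iter_ne hp ha (Nat.succ_pos k)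
        (by rw [Function.iterate_succ_apply, hpa, hk])
    · have hSym : s(b, p b) ∉ W.edges := by rwa [hpb, Sym2.eq_swap]
      obtain ⟨k, hk⟩ := (below_walk hp W hSym).mpr ⟨0, rfl⟩
      exact p_iter_ne hp hb (Nat.succ_pos k)
        (by rw [Function.iterate_succ_apply, hpb, hk])

lemma parent_unique {p p' : V → V} {r : V}
    (hp : p ∈ CPSet (Finset.univ.erase r) Finset.univ)
    (hp' : p' ∈ CPSet (Finset.univ.erase r) Finset.univ)
    (hG : parGraph p r = parGraph p' r) : p = p' := by
  obtain ⟨hmem, hpr, hesc⟩ := mem_CPSet_root hp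
  obtain ⟨_, hpr', hesc'⟩ := mem_CPSet_root hp'
  have main : ∀ (k : ℕ) (v : V), v ≠ r → p'^[k] v = r → p v = p' v := by
    intro k
    induction k with
    | zero => intro v hv hr; exact absurd hr hv
    | succ k ih =>
        intro v hv hr
        have adj1 : (parGraph p r).Adj v (p v) := (parGraph_adj hp).mpr (Or.inl ⟨hv, rfl⟩)
        rw [hG, parGraph_adj hp'] at adj1
        rcases adj1 with ⟨-, h⟩ | ⟨hpvr, h2⟩
        · exact h.symm
        · have adj2 : (parGraph p' r).Adj v (p' v) := (parGraph_adj hp').mpr (Or.inl ⟨hv, rfl⟩)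
          rw [← hG, parGraph_adj hp] at adj2
          rcases adj2 with ⟨-, h⟩ | ⟨hne', h3⟩
          · exact h
          · -- h3 : p (p' v) = v
            have hwr : p' v ≠ r := by
              intro he
              rw [he, hpr] at h3
              exact hv h3.symm
            have hk' : p'^[k] (p' v) = r := by rwa [← Function.iterate_succ_apply]
            have := ih (p' v) hwr hk'
            rw [h3] at this
            exact absurd (by rw [show p'^[2] v = p' (p' v) by
                rw [Function.iterate_succ_apply', Function.iterate_one], ← this])
              (fun hh => p_iter_ne hp' hv (by norm_num) hh)
  funext v
  by_cases hv : v = r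
  · rw [hv, hpr, hpr']
  · obtain ⟨k, hk⟩ := hesc' v hv
    exact main k v hv hk

end Graph
section TreeSide

open SimpleGraph SimpleGraph.Walk

variable {V : Type*} [Fintype V] [DecidableEq V] {G : SimpleGraph V}

/-- The chosen path between two vertices of a tree. -/
noncomputable def treePath (hT : G.IsTree) (v r : V) : G.Walk v r :=
  (hT.existsUnique_path v r).exists.choose

lemma treePath_isPath (hT : G.IsTree) (v r : V) : (treePath hT v r).IsPath :=
  (hT.existsUnique_path v r).exists.choose_spec

lemma treePath_eq (hT : G.IsTree) {v r : V} {q : G.Walk v r} (hq : q.IsPath) :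
    q = treePath hT v r :=
  (hT.existsUnique_path v r).unique hq (treePath_isPath hT v r)

lemma treePath_self (hT : G.IsTree) (r : V) : treePath hT r r = Walk.nil :=
  (treePath_eq hT Walk.IsPath.nil).symm

/-- The parent map of a tree with respect to a root. -/
noncomputable def par (hT : G.IsTree) (r : V) : V → V :=
  fun v => if v = r then v else (treePath hT v r).getVert 1

lemma par_root (hT : G.IsTree) (r : V) : par hT r r = r := if_pos rfl

lemma par_cons (hT : G.IsTree) {r v : V} (hv : v ≠ r) :
    ∃ h : G.Adj v (par hT r v),
      treePath hT v r = Walk.cons h (treePath hT (par hT r v) r) := by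
  have hnn : ¬(treePath hT v r).Nil := Walk.not_nil_of_ne hv
  obtain ⟨x, h, q, hq⟩ := Walk.not_nil_iff.mp hnn
  have hpar : par hT r v = x := by
    rw [par, if_neg hv, hq, Walk.getVert_cons_succ, Walk.getVert_zero]
  subst hpar
  refine ⟨h, ?_⟩
  rw [hq]
  congr 1
  exact treePath_eq hT (Walk.IsPath.of_cons (hq ▸ treePath_isPath hT v r))

lemma par_adj (hT : G.IsTree) {r v : V} (hv : v ≠ r) : G.Adj v (par hT r v) :=
  (par_cons hT hv).choose

lemma par_length (hT : G.IsTree) {r v : V} (hv : v ≠ r) :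
    (treePath hT (par hT r v) r).length + 1 = (treePath hT v r).length := by
  obtain ⟨h, hc⟩ := par_cons hT hv
  rw [hc, Walk.length_cons]

lemma par_escape (hT : G.IsTree) (r : V) :
    ∀ (L : ℕ) (v : V), (treePath hT v r).length ≤ L → ∃ k, (par hT r)^[k] v = r := by
  intro L
  induction L with
  | zero =>
      intro v hL
      by_cases hv : v = r
      · exact ⟨0, hv⟩
      · have := par_length hT hv
        omega
  | succ L ih =>
      intro v hL
      by_cases hv : v = r
      · exact ⟨0, hv⟩
      · have hlen := par_length hT hv
        obtain ⟨k, hk⟩ := ih (par hT r v) (by omega)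
        exact ⟨k + 1, by rwa [Function.iterate_succ_apply]⟩

lemma getVert_one_of_edge {a c b : V} {W : G.Walk a c} (hW : W.IsPath)
    (he : s(a, b) ∈ W.edges) : W.getVert 1 = b := by
  induction W with
  | nil => simp at he
  | @cons u x w h q ih =>
      rw [Walk.edges_cons, List.mem_cons] at he
      rcases he with he | he
      · rcases Sym2.eq_iff.mp he with ⟨-, rfl⟩ | ⟨rfl, rfl⟩
        · rw [Walk.getVert_cons_succ, Walk.getVert_zero]
        · exact absurd rfl h.ne
      · have := Walk.fst_mem_support_of_mem_edges q he
        rw [Walk.cons_isPath_iff] at hW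
        exact absurd this hW.2

lemma par_dichotomy (hT : G.IsTree) {r a b : V} (hadj : G.Adj a b) :
    par hT r a = b ∨ par hT r b = a := by
  have hbr := isAcyclic_iff_forall_adj_isBridge.mp hT.2 hadj
  have hmem := (SimpleGraph.isBridge_iff_adj_and_forall_walk_mem_edges.mp hbr)
    ((treePath hT a r).append (treePath hT b r).reverse)
  rw [Walk.edges_append, List.mem_append] at hmem
  rcases hmem with h1 | h1
  · left
    have ha : a ≠ r := by
      rintro rfl
      rw [treePath_self] at h1
      simp at h1
    rw [par, if_neg ha]
    exact getVert_one_of_edge (treePath_isPath hT a r) h1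
  · right
    rw [Walk.edges_reverse, List.mem_reverse] at h1
    have hb : b ≠ r := by
      rintro rfl
      rw [treePath_self] at h1
      simp at h1
    rw [par, if_neg hb]
    exact getVert_one_of_edge (treePath_isPath hT b r) (by rwa [Sym2.eq_swap])

lemma adj_iff_par (hT : G.IsTree) (r : V) {u w : V} :
    G.Adj u w ↔ ((u ≠ r ∧ par hT r u = w) ∨ (w ≠ r ∧ par hT r w = u)) := by
  constructor
  · intro hadj
    rcases par_dichotomy hT (r := r) hadj with h | h
    · left
      refine ⟨?_, h⟩
      rintro rfl
      rw [par_root] at h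
      exact hadj.ne h
    · right
      refine ⟨?_, h⟩
      rintro rfl
      rw [par_root] at h
      exact hadj.ne h.symm
  · rintro (⟨hu, rfl⟩ | ⟨hw, rfl⟩)
    · exact par_adj hT hu
    · exact (par_adj hT hw).symm

lemma par_mem_CPSet (hT : G.IsTree) (r : V) :
    par hT r ∈ CPSet (Finset.univ.erase r) Finset.univ := by
  rw [mem_CPSet]
  refine ⟨fun u hu => ?_, fun u _ => Finset.mem_univ _, fun u hu => ?_⟩
  · have : u = r := by
      by_contra h
      exact hu (Finset.mem_erase.mpr ⟨h, Finset.mem_univ u⟩)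
    rw [this, par_root]
  · obtain ⟨k, hk⟩ := par_escape hT r (treePath hT u r).length u le_rfl
    exact ⟨k, by simp [Finset.mem_erase, hk]⟩

lemma parGraph_par (hT : G.IsTree) (r : V) : parGraph (par hT r) r = G := by
  ext u w
  rw [parGraph_adj (par_mem_CPSet hT r), ← adj_iff_par hT r]

end TreeSide
section Weight

variable {V : Type*} [Fintype V] [DecidableEq V]

lemma weight_eq {G : SimpleGraph V} {r : V} {p : V → V}
    (hp : p ∈ CPSet (Finset.univ.erase r) Finset.univ)
    (hadj : ∀ u w, G.Adj u w ↔ ((u ≠ r ∧ p u = w) ∨ (w ≠ r ∧ p w = u))) :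
    (X r : MvPolynomial V ℚ) ^ (G.neighborSet r).ncard *
      ∏ v ∈ Finset.univ.erase r, (X v : MvPolynomial V ℚ) ^ ((G.neighborSet v).ncard - 1)
    = ∏ u ∈ Finset.univ.erase r, X (p u) := by
  classical
  have hncard : ∀ v, (G.neighborSet v).ncard = (Finset.univ.filter (G.Adj v ·)).card := by
    intro v
    rw [Set.ncard_eq_toFinset_card']
    congr 1
    ext w
    simp [SimpleGraph.mem_neighborSet]
  have hr : Finset.univ.filter (G.Adj r ·)
      = (Finset.univ.erase r).filter (fun u => p u = r) := by
    ext w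
    simp only [Finset.mem_filter, Finset.mem_univ, true_and, Finset.mem_erase, hadj r w]
    constructor
    · rintro (⟨h, -⟩ | ⟨hw, hpw⟩)
      · exact absurd rfl h
      · exact ⟨⟨hw, trivial⟩, hpw⟩
    · rintro ⟨⟨hw, -⟩, hpw⟩
      exact Or.inr ⟨hw, hpw⟩
  have hins : ∀ v ∈ Finset.univ.erase r,
      Finset.univ.filter (G.Adj v ·)
        = insert (p v) ((Finset.univ.erase r).filter (fun u => p u = v)) := by
    intro v hv
    have hvr : v ≠ r := (Finset.mem_erase.mp hv).1
    ext w
    simp only [Finset.mem_filter, Finset.mem_univ, true_and, Finset.mem_insert,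
      Finset.mem_erase, hadj v w]
    constructor
    · rintro (⟨-, hpv⟩ | ⟨hw, hpw⟩)
      · exact Or.inl hpv.symm
      · exact Or.inr ⟨⟨hw, trivial⟩, hpw⟩
    · rintro (rfl | ⟨⟨hw, -⟩, hpw⟩)
      · exact Or.inl ⟨hvr, rfl⟩
      · exact Or.inr ⟨hw, hpw⟩
  have hnotmem : ∀ v ∈ Finset.univ.erase r,
      p v ∉ (Finset.univ.erase r).filter (fun u => p u = v) := by
    intro v hv hmem
    rw [Finset.mem_filter] at hmem
    rw [mem_CPSet] at hp
    refine no_iter_cycle hp.1 hp.2.2 hv (m := 2) (by norm_num) ?_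
    rw [show p^[2] v = p (p v) by rw [Function.iterate_succ_apply', Function.iterate_one]]
    exact hmem.2
  -- counts
  have hcr : (G.neighborSet r).ncard
      = ((Finset.univ.erase r).filter (fun u => p u = r)).card := by rw [hncard, hr]
  have hcv : ∀ v ∈ Finset.univ.erase r, (G.neighborSet v).ncard
      = ((Finset.univ.erase r).filter (fun u => p u = v)).card + 1 := by
    intro v hv
    rw [hncard, hins v hv, Finset.card_insert_of_notMem (hnotmem v hv)]
  rw [hcr]
  rw [Finset.prod_congr rfl (fun v hv => by rw [hcv v hv, Nat.add_sub_cancel])]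
  -- both sides equal ∏ over all v of X v ^ (number of children)
  have rhs : ∏ u ∈ Finset.univ.erase r, (X (p u) : MvPolynomial V ℚ)
      = ∏ v ∈ Finset.univ,
          (X v : MvPolynomial V ℚ) ^ ((Finset.univ.erase r).filter (fun u => p u = v)).card := by
    rw [← Finset.prod_fiberwise_of_maps_to (t := Finset.univ) (fun u _ => Finset.mem_univ (p u))
      (fun u => (X (p u) : MvPolynomial V ℚ))]
    refine Finset.prod_congr rfl fun v _ => ?_
    rw [Finset.prod_congr rfl (fun u hu => by
      rw [(Finset.mem_filter.mp hu).2] : ∀ u ∈ (Finset.univ.erase r).filter (fun u => p u = v),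
        (X (p u) : MvPolynomial V ℚ) = X v)]
    rw [Finset.prod_const]
  rw [rhs, ← Finset.mul_prod_erase Finset.univ _ (Finset.mem_univ r)]

end Weight

/- **Rooted Cayley formula.** For `n ≥ 1`, `(x₁ + ⋯ + x_{n+1})^n` equals the sum
over all rooted labeled trees on `{1, …, n+1}` (a labeled tree together with a
distinguished root `r`) of `x_r^(deg r) · ∏_{v ≠ r} x_v^(deg v - 1)`. -/
open scoped Classical in
theorem rooted_cayley_formula (n : ℕ) (hn : 0 < n) :
    (∑ i : Fin (n + 1), X i : MvPolynomial (Fin (n + 1)) ℚ) ^ n =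
      ∑ T : {G : SimpleGraph (Fin (n + 1)) // G.IsTree},
        ∑ r : Fin (n + 1),
          X r ^ (T.1.neighborSet r).ncard *
            ∏ v ∈ Finset.univ.erase r, X v ^ ((T.1.neighborSet v).ncard - 1) := by
  classical
  rw [Finset.sum_comm]
  have hstep : ∀ r : Fin (n + 1),
      (∑ T : {G : SimpleGraph (Fin (n + 1)) // G.IsTree},
        X r ^ (T.1.neighborSet r).ncard *
          ∏ v ∈ Finset.univ.erase r, (X v : MvPolynomial (Fin (n + 1)) ℚ) ^ ((T.1.neighborSet v).ncard - 1))
      = CHSum (Finset.univ.erase r) Finset.univ := by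
    intro r
    rw [CHSum]
    refine Finset.sum_bij' (fun T _ => par T.2 r)
      (fun p hp => ⟨parGraph p r, parGraph_isTree (by simpa [CPSet] using hp)⟩)
      ?_ ?_ ?_ ?_ ?_
    · intro T _
      exact par_mem_CPSet T.2 r
    · intro p hp
      exact Finset.mem_univ _
    · intro T _
      exact Subtype.ext (parGraph_par T.2 r)
    · intro p hp
      exact parent_unique (par_mem_CPSet _ r) hp (parGraph_par _ r)
    · intro T _
      exact weight_eq (par_mem_CPSet T.2 r) (fun u w => adj_iff_par T.2 r)
  rw [Finset.sum_congr rfl (fun r _ => hstep r)]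
  have hcard : ∀ r : Fin (n + 1), (Finset.univ.erase r).card = n := by
    intro r
    rw [Finset.card_erase_of_mem (Finset.mem_univ r), Finset.card_univ, Fintype.card_fin]
    omega
  have hCH : ∀ r : Fin (n + 1), CHSum (Finset.univ.erase r) Finset.univ
      = (X r : MvPolynomial (Fin (n + 1)) ℚ) * (∑ v, X v) ^ (n - 1) := by
    intro r
    rw [CHSum_eq ((Finset.univ.erase r).card) (Finset.univ.erase r) Finset.univ le_rfl
      (Finset.subset_univ _) (Finset.card_pos.mp (by rw [hcard r]; omega)),
      Finset.sdiff_erase_self (Finset.mem_univ r), Finset.sum_singleton, hcard r]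
  rw [Finset.sum_congr rfl (fun r _ => hCH r), ← Finset.sum_mul]
  rw [show n = (n - 1) + 1 by omega, pow_succ']
  simp
end

section
/- For any positive integer n and indeterminates x_1,...,x_n, one has (1 + x_1 + ... + x_n)^{n-1} = sum over all set partitions π of {1,...,n} of the product over blocks B of π of (sum_{b in B} x_b)^{|B|-1}. -/
open MvPolynomial Finset

/-- `P` is a set partition of the finset `S`: its parts are nonempty, pairwise
disjoint, and their union is `S`. -/
abbrev IsSetPartition {α : Type*} [DecidableEq α] (S : Finset α)
    (P : Finset (Finset α)) : Prop :=
  (∀ B ∈ P, B.Nonempty) ∧ (∀ B ∈ P, ∀ B' ∈ P, B ≠ B' → Disjoint B B') ∧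
    P.sup id = S

/-- The finset of all set partitions of a finset `S` in a finite type. -/
def partitionsOf {α : Type*} [Fintype α] [DecidableEq α] (S : Finset α) :
    Finset (Finset (Finset α)) :=
  Finset.univ.filter (IsSetPartition S)

/- For `n ≥ 1`: `(1 + x₁ + ⋯ + x_n)^{n-1}` equals the sum over all set
partitions `π` of `{1, …, n}` of `∏_{B ∈ π} (∑_{b ∈ B} x_b)^(|B| - 1)`. -/
section Aux

variable {ι : Type*} [DecidableEq ι] {R : Type*} [CommRing R]


lemma diff_lemma (z : ι → R) (w : R) :
    ∀ (S : Finset ι) (k : ℕ), k < S.card →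
      ∑ A ∈ S.powerset, (-1 : R) ^ ((S \ A).card) * (w + ∑ i ∈ A, z i) ^ k = 0 := by
  intro S
  induction S using Finset.induction_on with
  | empty => intro k hk; simp at hk
  | @insert s T hs ih =>
    intro k hk
    rw [Finset.sum_powerset_insert hs, ← Finset.sum_add_distrib]
    have hcard : ∀ A ∈ T.powerset, ((insert s T \ A).card) = (T \ A).card + 1 := by
      intro A hA
      rw [Finset.mem_powerset] at hA
      rw [Finset.insert_sdiff_of_notMem _ (fun h => hs (hA h)),
        Finset.card_insert_of_notMem (by simp [hs])]
    have hcard2 : ∀ A ∈ T.powerset, ((insert s T \ insert s A).card) = (T \ A).card := by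
      intro A hA
      rw [Finset.insert_sdiff_insert, Finset.sdiff_insert,
        Finset.erase_eq_of_notMem (by simp [hs])]
    have key : ∀ A ∈ T.powerset,
        (-1:R)^((insert s T \ A).card) * (w + ∑ i ∈ A, z i)^k
          + (-1:R)^((insert s T \ insert s A).card) * (w + ∑ i ∈ insert s A, z i)^k
        = ∑ j ∈ Finset.range k,
            (z s)^(k-j) * (k.choose j : R) * ((-1:R)^((T \ A).card) * (w + ∑ i ∈ A, z i)^j) := by
      intro A hA
      have hsA : s ∉ A := fun h => hs (Finset.mem_powerset.mp hA h)
      rw [hcard A hA, hcard2 A hA, Finset.sum_insert hsA, pow_succ]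
      have h1 : ((-1:R)^((T\A).card) * -1) * (w + ∑ i ∈ A, z i)^k
            + (-1:R)^((T\A).card) * (w + (z s + ∑ i ∈ A, z i))^k
          = (-1:R)^((T\A).card)
            * ((w + (z s + ∑ i ∈ A, z i))^k - (w + ∑ i ∈ A, z i)^k) := by ring
      have expand : (w + (z s + ∑ i ∈ A, z i))^k
          = ∑ j ∈ Finset.range (k+1),
              (w + ∑ i ∈ A, z i)^j * (z s)^(k-j) * (k.choose j : R) := by
        rw [show w + (z s + ∑ i ∈ A, z i) = (w + ∑ i ∈ A, z i) + z s by ring, add_pow]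
      rw [h1, expand, Finset.sum_range_succ]
      simp only [Nat.sub_self, pow_zero, Nat.choose_self, Nat.cast_one, mul_one]
      rw [add_sub_cancel_right, Finset.mul_sum]
      exact Finset.sum_congr rfl fun j hj => by ring
    rw [Finset.sum_congr rfl key, Finset.sum_comm]
    apply Finset.sum_eq_zero
    intro j hj
    rw [← Finset.mul_sum, ih j
      (lt_of_lt_of_le (Finset.mem_range.mp hj)
        (Nat.lt_succ_iff.mp (by rwa [Finset.card_insert_of_notMem hs] at hk))), mul_zero]

lemma powerset_sum_mem {M : Type*} [AddCommMonoid M] (T : Finset ι) (g : Finset ι → ι → M) :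
    ∑ A ∈ T.powerset, ∑ t ∈ A, g A t
      = ∑ t ∈ T, ∑ A ∈ (T.erase t).powerset, g (insert t A) t := by
  have h1 : ∀ A ∈ T.powerset, ∑ t ∈ A, g A t = ∑ t ∈ T, if t ∈ A then g A t else 0 := by
    intro A hA
    rw [Finset.sum_ite_mem, Finset.inter_eq_right.mpr (Finset.mem_powerset.mp hA)]
  rw [Finset.sum_congr rfl h1, Finset.sum_comm]
  apply Finset.sum_congr rfl
  intro t ht
  have hT : T = insert t (T.erase t) := (Finset.insert_erase ht).symm
  rw [show T.powerset = (insert t (T.erase t)).powerset by rw [← hT],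
    Finset.sum_powerset_insert (Finset.notMem_erase t T)]
  have z1 : ∑ A ∈ (T.erase t).powerset, (if t ∈ A then g A t else 0) = 0 := by
    apply Finset.sum_eq_zero
    intro A hA
    have : t ∉ A := fun h => Finset.notMem_erase t T (Finset.mem_powerset.mp hA h)
    simp [this]
  rw [z1, zero_add]
  apply Finset.sum_congr rfl
  intro A hA
  simp
lemma aeval_helper (u a b : R) (k : ℕ) :
    Polynomial.aeval (Polynomial.X + Polynomial.C u : (Polynomial R)) ((Polynomial.X + Polynomial.C a) ^ k * Polynomial.C b)
      = (Polynomial.X + Polynomial.C u + Polynomial.C a) ^ k * Polynomial.C b := by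
  rw [map_mul, map_pow, map_add, Polynomial.aeval_X, Polynomial.aeval_C,
    Polynomial.aeval_C, Polynomial.algebraMap_eq]

lemma hurwitz [IsDomain R] [CharZero R] (z : ι → R) (T : Finset ι) :
    ∑ A ∈ T.powerset, (Polynomial.X + Polynomial.C (∑ i ∈ A, z i)) ^ A.card
        * Polynomial.C ((1 + ∑ i ∈ T \ A, z i) ^ ((T \ A).card - 1))
      = (1 + Polynomial.X + Polynomial.C (∑ i ∈ T, z i)) ^ T.card := by
  induction T using Finset.strongInduction with
  | _ T ih =>
  rcases T.eq_empty_or_nonempty with rfl | hT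
  · simp
  -- derivative of LHS equals derivative of RHS
  have hder : Polynomial.derivative
        (∑ A ∈ T.powerset, (Polynomial.X + Polynomial.C (∑ i ∈ A, z i)) ^ A.card
          * Polynomial.C ((1 + ∑ i ∈ T \ A, z i) ^ ((T \ A).card - 1)))
      = Polynomial.derivative ((1 + Polynomial.X + Polynomial.C (∑ i ∈ T, z i)) ^ T.card) := by
    have hR : Polynomial.derivative ((1 + Polynomial.X + Polynomial.C (∑ i ∈ T, z i)) ^ T.card)
        = T.card • (1 + Polynomial.X + Polynomial.C (∑ i ∈ T, z i)) ^ (T.card - 1) := by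
      rw [Polynomial.derivative_pow]
      simp only [Polynomial.derivative_add, Polynomial.derivative_one,
        Polynomial.derivative_X, Polynomial.derivative_C, zero_add, add_zero, mul_one]
      rw [nsmul_eq_mul, Polynomial.C_eq_natCast]
    have hL : Polynomial.derivative
          (∑ A ∈ T.powerset, (Polynomial.X + Polynomial.C (∑ i ∈ A, z i)) ^ A.card
            * Polynomial.C ((1 + ∑ i ∈ T \ A, z i) ^ ((T \ A).card - 1)))
        = ∑ A ∈ T.powerset, ∑ t ∈ A,
            (Polynomial.X + Polynomial.C (∑ i ∈ A, z i)) ^ (A.card - 1)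
              * Polynomial.C ((1 + ∑ i ∈ T \ A, z i) ^ ((T \ A).card - 1)) := by
      rw [map_sum]
      apply Finset.sum_congr rfl
      intro A hA
      rw [Polynomial.derivative_mul, Polynomial.derivative_C, mul_zero, add_zero,
        Polynomial.derivative_pow]
      simp only [Polynomial.derivative_add, Polynomial.derivative_X, Polynomial.derivative_C,
        add_zero, mul_one]
      rw [Finset.sum_const, ← smul_mul_assoc, nsmul_eq_mul, Polynomial.C_eq_natCast]
    rw [hL, hR, powerset_sum_mem]
    have inner : ∀ t ∈ T, ∑ A ∈ (T.erase t).powerset,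
          (Polynomial.X + Polynomial.C (∑ i ∈ insert t A, z i)) ^ ((insert t A).card - 1)
            * Polynomial.C ((1 + ∑ i ∈ T \ insert t A, z i) ^ ((T \ insert t A).card - 1))
        = (1 + Polynomial.X + Polynomial.C (∑ i ∈ T, z i)) ^ (T.card - 1) := by
      intro t ht
      have key := congrArg (Polynomial.aeval (Polynomial.X + Polynomial.C (z t) : (Polynomial R)))
        (ih (T.erase t) (Finset.erase_ssubset ht))
      rw [map_sum, map_pow, map_add, map_add, map_one, Polynomial.aeval_X,
        Polynomial.aeval_C, Polynomial.algebraMap_eq] at key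
      have hTc : z t + ∑ i ∈ T.erase t, z i = ∑ i ∈ T, z i := Finset.add_sum_erase T z ht
      have hcard : (T.erase t).card = T.card - 1 := Finset.card_erase_of_mem ht
      calc ∑ A ∈ (T.erase t).powerset,
              (Polynomial.X + Polynomial.C (∑ i ∈ insert t A, z i)) ^ ((insert t A).card - 1)
                * Polynomial.C ((1 + ∑ i ∈ T \ insert t A, z i) ^ ((T \ insert t A).card - 1))
          = ∑ A ∈ (T.erase t).powerset,
              (Polynomial.X + Polynomial.C (z t) + Polynomial.C (∑ i ∈ A, z i)) ^ A.card
                * Polynomial.C ((1 + ∑ i ∈ T.erase t \ A, z i) ^ ((T.erase t \ A).card - 1)) := by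
            apply Finset.sum_congr rfl
            intro A hA
            have htA : t ∉ A := fun h =>
              Finset.notMem_erase t T (Finset.mem_powerset.mp hA h)
            have h1 : (insert t A).card - 1 = A.card := by
              rw [Finset.card_insert_of_notMem htA]; omega
            have h2 : T \ insert t A = T.erase t \ A := by
              rw [Finset.sdiff_insert, Finset.erase_eq, Finset.erase_eq, sdiff_sdiff_comm]
            rw [h1, h2, Finset.sum_insert htA, Polynomial.C_add, add_assoc]
        _ = (1 + (Polynomial.X + Polynomial.C (z t)) + Polynomial.C (∑ i ∈ T.erase t, z i)) ^ (T.erase t).card := by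
            rw [← key]
            exact Finset.sum_congr rfl fun A hA => (aeval_helper _ _ _ _).symm
        _ = (1 + Polynomial.X + Polynomial.C (∑ i ∈ T, z i)) ^ (T.card - 1) := by
            rw [hcard, ← hTc, Polynomial.C_add]
            ring
    rw [Finset.sum_congr rfl inner, Finset.sum_const]
  -- conclude from equal derivatives and evaluation at -1 - σT
  set r : R := -1 - ∑ i ∈ T, z i with hr
  have hevq : Polynomial.eval r ((1 + Polynomial.X + Polynomial.C (∑ i ∈ T, z i)) ^ T.card) = 0 := by
    rw [Polynomial.eval_pow, Polynomial.eval_add, Polynomial.eval_add, Polynomial.eval_one,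
      Polynomial.eval_X, Polynomial.eval_C, hr]
    rw [show (1 : R) + (-1 - ∑ i ∈ T, z i) + ∑ i ∈ T, z i = 0 by ring]
    exact zero_pow hT.card_pos.ne'
  have hevp : Polynomial.eval r
      (∑ A ∈ T.powerset, (Polynomial.X + Polynomial.C (∑ i ∈ A, z i)) ^ A.card
        * Polynomial.C ((1 + ∑ i ∈ T \ A, z i) ^ ((T \ A).card - 1))) = 0 := by
    rw [Polynomial.eval_finset_sum]
    have term : ∀ A ∈ T.powerset,
        Polynomial.eval r ((Polynomial.X + Polynomial.C (∑ i ∈ A, z i)) ^ A.card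
            * Polynomial.C ((1 + ∑ i ∈ T \ A, z i) ^ ((T \ A).card - 1)))
          = (-1 : R) ^ ((T \ (T \ A)).card) * (1 + ∑ i ∈ T \ A, z i) ^ (T.card - 1) := by
      intro A hA
      have hAT : A ⊆ T := Finset.mem_powerset.mp hA
      rw [Finset.sdiff_sdiff_eq_self hAT]
      rw [Polynomial.eval_mul, Polynomial.eval_pow, Polynomial.eval_add, Polynomial.eval_X,
        Polynomial.eval_C, Polynomial.eval_C]
      have hsplit : (∑ i ∈ T \ A, z i) + ∑ i ∈ A, z i = ∑ i ∈ T, z i :=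
        Finset.sum_sdiff hAT
      have hneg : r + ∑ i ∈ A, z i = -(1 + ∑ i ∈ T \ A, z i) := by
        rw [hr, ← hsplit]; ring
      rw [hneg, neg_pow, mul_assoc, ← pow_add]
      by_cases hAeq : A = T
      · subst hAeq
        simp
      · have hne : (T \ A).Nonempty := by
          rw [Finset.sdiff_nonempty]
          exact fun h => hAeq (Finset.Subset.antisymm hAT h)
        have hcle : A.card ≤ T.card := Finset.card_le_card hAT
        have hcsd : (T \ A).card = T.card - A.card := Finset.card_sdiff_of_subset hAT
        have : A.card + ((T \ A).card - 1) = T.card - 1 := by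
          have := Finset.card_pos.mpr hne
          omega
        rw [this]
    rw [Finset.sum_congr rfl term]
    have reindex : ∑ A ∈ T.powerset,
        (-1 : R) ^ ((T \ (T \ A)).card) * (1 + ∑ i ∈ T \ A, z i) ^ (T.card - 1)
        = ∑ B ∈ T.powerset, (-1 : R) ^ ((T \ B).card) * (1 + ∑ i ∈ B, z i) ^ (T.card - 1) := by
      apply Finset.sum_bij' (fun A _ => T \ A) (fun B _ => T \ B)
      · intro a ha; exact Finset.mem_powerset.mpr (Finset.sdiff_subset)
      · intro a ha; exact Finset.mem_powerset.mpr (Finset.sdiff_subset)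
      · intro a ha; exact Finset.sdiff_sdiff_eq_self (Finset.mem_powerset.mp ha)
      · intro a ha; exact Finset.sdiff_sdiff_eq_self (Finset.mem_powerset.mp ha)
      · intro a ha; rfl
    rw [reindex]
    exact diff_lemma z (1 : R) T (T.card - 1) (by have := hT.card_pos; omega)
  have hd0 : Polynomial.derivative
      ((∑ A ∈ T.powerset, (Polynomial.X + Polynomial.C (∑ i ∈ A, z i)) ^ A.card
          * Polynomial.C ((1 + ∑ i ∈ T \ A, z i) ^ ((T \ A).card - 1)))
        - (1 + Polynomial.X + Polynomial.C (∑ i ∈ T, z i)) ^ T.card) = 0 := by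
    rw [map_sub, hder, sub_self]
  have hc := Polynomial.eq_C_of_derivative_eq_zero hd0
  have hev := congrArg (Polynomial.eval r) hc
  rw [Polynomial.eval_sub, hevp, hevq, sub_zero, Polynomial.eval_C] at hev
  rw [← sub_eq_zero, hc, ← hev, map_zero]



def partsOf (S : Finset ι) : Finset (Finset (Finset ι)) :=
  S.powerset.powerset.filter (IsSetPartition S)

lemma mem_partsOf {S : Finset ι} {P : Finset (Finset ι)} :
    P ∈ partsOf S ↔ IsSetPartition S P := by
  constructor
  · exact fun h => (Finset.mem_filter.mp h).2
  · intro h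
    refine Finset.mem_filter.mpr ⟨Finset.mem_powerset.mpr fun B hB => ?_, h⟩
    exact Finset.mem_powerset.mpr (h.2.2 ▸ Finset.le_sup (f := id) hB)

lemma partsOf_empty : partsOf (∅ : Finset ι) = {∅} := by
  ext P
  rw [mem_partsOf, Finset.mem_singleton]
  constructor
  · intro ⟨h1, _, h3⟩
    rw [Finset.eq_empty_iff_forall_notMem]
    intro B hB
    have hBne := h1 B hB
    have : (B : Finset ι) ⊆ ∅ := h3 ▸ Finset.le_sup (f := id) hB
    exact hBne.ne_empty (Finset.subset_empty.mp this)
  · rintro rfl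
    exact ⟨by simp, by simp, Finset.sup_empty⟩

def blockOf (P : Finset (Finset ι)) (s : ι) : Finset ι :=
  P.sup (fun B => if s ∈ B then B else ∅)

lemma blockOf_eq {S : Finset ι} {P : Finset (Finset ι)} (hP : IsSetPartition S P)
    {B : Finset ι} (hBP : B ∈ P) (hsB : s ∈ B) : blockOf P s = B := by
  apply le_antisymm
  · apply Finset.sup_le
    intro B' hB'
    by_cases h : s ∈ B'
    · have : B' = B := by
        by_contra hne
        exact (Finset.disjoint_left.mp (hP.2.1 B' hB' B hBP hne) h) hsB
      rw [this, if_pos hsB]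
    · simp [h]
  · calc B = (if s ∈ B then B else ∅) := by simp [hsB]
      _ ≤ _ := Finset.le_sup (f := fun B' => if s ∈ B' then B' else ∅) hBP

lemma blockOf_mem {S : Finset ι} {P : Finset (Finset ι)} (hP : IsSetPartition S P)
    {s : ι} (hs : s ∈ S) : blockOf P s ∈ P ∧ s ∈ blockOf P s := by
  have : s ∈ P.sup id := hP.2.2.symm ▸ hs
  obtain ⟨B, hBP, hsB⟩ := Finset.mem_sup.mp this
  rw [blockOf_eq hP hBP hsB]
  exact ⟨hBP, hsB⟩

lemma erase_partition {S : Finset ι} {P : Finset (Finset ι)} (hP : IsSetPartition S P)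
    {B : Finset ι} (hBP : B ∈ P) : IsSetPartition (S \ B) (P.erase B) := by
  refine ⟨fun B' hB' => hP.1 B' (Finset.mem_of_mem_erase hB'), fun B' hB' B'' hB'' hne =>
    hP.2.1 B' (Finset.mem_of_mem_erase hB') B'' (Finset.mem_of_mem_erase hB'') hne, ?_⟩
  have hsup : B ⊔ (P.erase B).sup id = S := by
    have h := hP.2.2
    rw [← Finset.insert_erase hBP, Finset.sup_insert] at h
    simpa using h
  have hdisj : Disjoint B ((P.erase B).sup id) := by
    rw [Finset.disjoint_sup_right]
    intro B' hB'
    exact hP.2.1 B hBP B' (Finset.mem_of_mem_erase hB')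
      (Ne.symm (Finset.ne_of_mem_erase hB'))
  rw [← hsup, Finset.sup_eq_union, Finset.union_sdiff_cancel_left hdisj]

lemma insert_partition {S : Finset ι} {B : Finset ι} (hB : B.Nonempty) (hBS : B ⊆ S)
    {Q : Finset (Finset ι)} (hQ : IsSetPartition (S \ B) Q) :
    IsSetPartition S (insert B Q) := by
  have hQB : ∀ B' ∈ Q, B' ⊆ S \ B := fun B' hB' =>
    hQ.2.2 ▸ Finset.le_sup (f := id) hB'
  refine ⟨?_, ?_, ?_⟩
  · intro B' hB'
    rcases Finset.mem_insert.mp hB' with rfl | h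
    · exact hB
    · exact hQ.1 B' h
  · have hdBQ : ∀ B' ∈ Q, Disjoint B B' := by
      intro B' hB'
      rw [Finset.disjoint_right]
      intro a haB'
      exact (Finset.mem_sdiff.mp (hQB B' hB' haB')).2
    intro B' hB' B'' hB'' hne
    rcases Finset.mem_insert.mp hB' with rfl | h'
    · rcases Finset.mem_insert.mp hB'' with rfl | h''
      · exact absurd rfl hne
      · exact hdBQ B'' h''
    · rcases Finset.mem_insert.mp hB'' with rfl | h''
      · exact (hdBQ B' h').symm
      · exact hQ.2.1 B' h' B'' h'' hne
  · rw [Finset.sup_insert, hQ.2.2, id, Finset.sup_eq_union,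
      Finset.union_sdiff_of_subset hBS]

lemma notMem_of_partition {S : Finset ι} {B : Finset ι} (hB : B.Nonempty)
    {Q : Finset (Finset ι)} (hQ : IsSetPartition (S \ B) Q) : B ∉ Q := by
  intro hBQ
  obtain ⟨a, ha⟩ := hB
  have : B ⊆ S \ B := hQ.2.2 ▸ Finset.le_sup (f := id) hBQ
  exact (Finset.mem_sdiff.mp (this ha)).2 ha

lemma parts_recursion {R : Type*} [CommSemiring R] (g : Finset ι → R)
    (S : Finset ι) (s : ι) (hs : s ∈ S) :
    ∑ P ∈ partsOf S, ∏ B ∈ P, g B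
      = ∑ A ∈ (S.erase s).powerset, g (insert s A) *
          ∑ Q ∈ partsOf (S \ insert s A), ∏ B ∈ Q, g B := by
  have hrhs : ∀ A ∈ (S.erase s).powerset,
      g (insert s A) * ∑ Q ∈ partsOf (S \ insert s A), ∏ B ∈ Q, g B
        = ∑ Q ∈ partsOf (S \ insert s A), g (insert s A) * ∏ B ∈ Q, g B := by
    intro A _
    rw [Finset.mul_sum]
  rw [Finset.sum_congr rfl hrhs, Finset.sum_sigma']
  apply Finset.sum_bij'
    (i := fun P _ => (⟨(blockOf P s).erase s, P.erase (blockOf P s)⟩ :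
      (A : Finset ι) × Finset (Finset ι)))
    (j := fun p _ => insert (insert s p.1) p.2)
  · -- i maps into sigma set
    intro P hP
    have hP' := mem_partsOf.mp hP
    obtain ⟨hBm, hsB⟩ := blockOf_mem hP' hs
    have hBsub : blockOf P s ⊆ S := hP'.2.2 ▸ Finset.le_sup (f := id) hBm
    rw [Finset.mem_sigma]
    constructor
    · exact Finset.mem_powerset.mpr (Finset.erase_subset_erase s hBsub)
    · rw [Finset.insert_erase hsB]
      exact mem_partsOf.mpr (erase_partition hP' hBm)
  · -- j maps into partsOf S
    rintro ⟨A, Q⟩ hp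
    rw [Finset.mem_sigma] at hp
    obtain ⟨hA, hQ⟩ := hp
    have hAe : A ⊆ S.erase s := Finset.mem_powerset.mp hA
    have hBS : insert s A ⊆ S := by
      intro a ha
      rcases Finset.mem_insert.mp ha with rfl | h
      · exact hs
      · exact Finset.mem_of_mem_erase (hAe h)
    exact mem_partsOf.mpr
      (insert_partition (Finset.insert_nonempty s A) hBS (mem_partsOf.mp hQ))
  · -- left inverse
    intro P hP
    have hP' := mem_partsOf.mp hP
    obtain ⟨hBm, hsB⟩ := blockOf_mem hP' hs
    rw [Finset.insert_erase hsB, Finset.insert_erase hBm]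
  · -- right inverse
    rintro ⟨A, Q⟩ hp
    rw [Finset.mem_sigma] at hp
    obtain ⟨hA, hQ⟩ := hp
    have hAe : A ⊆ S.erase s := Finset.mem_powerset.mp hA
    have hsA : s ∉ A := fun h => Finset.notMem_erase s S (hAe h)
    have hBS : insert s A ⊆ S := by
      intro a ha
      rcases Finset.mem_insert.mp ha with rfl | h
      · exact hs
      · exact Finset.mem_of_mem_erase (hAe h)
    have hQ' := mem_partsOf.mp hQ
    have hnotmem : insert s A ∉ Q := notMem_of_partition (Finset.insert_nonempty s A) hQ'
    have hpart : IsSetPartition S (insert (insert s A) Q) :=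
      insert_partition (Finset.insert_nonempty s A) hBS hQ'
    have hblock : blockOf (insert (insert s A) Q) s = insert s A :=
      blockOf_eq hpart (Finset.mem_insert_self _ _) (Finset.mem_insert_self s A)
    have h1 : (blockOf (insert (insert s A) Q) s).erase s = A := by
      rw [hblock, Finset.erase_insert hsA]
    have h2 : (insert (insert s A) Q).erase (blockOf (insert (insert s A) Q) s) = Q := by
      rw [hblock, Finset.erase_insert hnotmem]
    exact Sigma.ext h1 (heq_of_eq h2)
  · -- values agree
    intro P hP
    have hP' := mem_partsOf.mp hP
    obtain ⟨hBm, hsB⟩ := blockOf_mem hP' hs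
    rw [Finset.insert_erase hsB, ← Finset.prod_insert (Finset.notMem_erase _ _),
      Finset.insert_erase hBm]

theorem mainGen (S : Finset ι) :
    (1 + ∑ i ∈ S, MvPolynomial.X i : MvPolynomial ι ℚ) ^ (S.card - 1)
      = ∑ P ∈ partsOf S,
          ∏ B ∈ P, (∑ b ∈ B, MvPolynomial.X b : MvPolynomial ι ℚ) ^ (B.card - 1) := by
  induction S using Finset.strongInduction with
  | _ S ih =>
  rcases S.eq_empty_or_nonempty with rfl | hS
  · simp [partsOf_empty]
  obtain ⟨s, hs⟩ := hS
  rw [parts_recursion (fun B => (∑ b ∈ B, MvPolynomial.X b : MvPolynomial ι ℚ) ^ (B.card - 1))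
    S s hs]
  have hinner : ∀ A ∈ (S.erase s).powerset,
      (fun B => (∑ b ∈ B, MvPolynomial.X b : MvPolynomial ι ℚ) ^ (B.card - 1)) (insert s A) *
        ∑ Q ∈ partsOf (S \ insert s A),
          ∏ B ∈ Q, (∑ b ∈ B, MvPolynomial.X b : MvPolynomial ι ℚ) ^ (B.card - 1)
      = (MvPolynomial.X s + ∑ i ∈ A, MvPolynomial.X i) ^ A.card
        * (1 + ∑ i ∈ S.erase s \ A, MvPolynomial.X i) ^ ((S.erase s \ A).card - 1) := by
    intro A hA
    have hAe : A ⊆ S.erase s := Finset.mem_powerset.mp hA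
    have hsA : s ∉ A := fun h => Finset.notMem_erase s S (hAe h)
    have hBS : insert s A ⊆ S := by
      intro a ha
      rcases Finset.mem_insert.mp ha with rfl | h
      · exact hs
      · exact Finset.mem_of_mem_erase (hAe h)
    have hssub : S \ insert s A ⊂ S :=
      Finset.sdiff_ssubset hBS (Finset.insert_nonempty s A)
    have hsd : S \ insert s A = S.erase s \ A := by
      rw [Finset.sdiff_insert, Finset.erase_eq, Finset.erase_eq, sdiff_sdiff_comm]
    rw [← ih _ hssub, hsd]
    simp only
    rw [Finset.sum_insert hsA, Finset.card_insert_of_notMem hsA]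
    congr 1
  rw [Finset.sum_congr rfl hinner]
  -- now apply the Hurwitz identity, evaluated at X s
  have h := congrArg (Polynomial.eval (MvPolynomial.X s : MvPolynomial ι ℚ))
    (hurwitz (fun i => (MvPolynomial.X i : MvPolynomial ι ℚ)) (S.erase s))
  rw [Polynomial.eval_finset_sum] at h
  have hterm : ∀ A ∈ (S.erase s).powerset,
      Polynomial.eval (MvPolynomial.X s : MvPolynomial ι ℚ)
        ((Polynomial.X + Polynomial.C (∑ i ∈ A, MvPolynomial.X i)) ^ A.card
          * Polynomial.C ((1 + ∑ i ∈ S.erase s \ A, MvPolynomial.X i)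
              ^ ((S.erase s \ A).card - 1)))
      = (MvPolynomial.X s + ∑ i ∈ A, MvPolynomial.X i) ^ A.card
        * (1 + ∑ i ∈ S.erase s \ A, MvPolynomial.X i) ^ ((S.erase s \ A).card - 1) := by
    intro A _
    rw [Polynomial.eval_mul, Polynomial.eval_pow, Polynomial.eval_add, Polynomial.eval_X,
      Polynomial.eval_C, Polynomial.eval_C]
  rw [Finset.sum_congr rfl hterm] at h
  rw [h]
  rw [Polynomial.eval_pow, Polynomial.eval_add, Polynomial.eval_add, Polynomial.eval_one,
    Polynomial.eval_X, Polynomial.eval_C, Finset.card_erase_of_mem hs, add_assoc,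
    Finset.add_sum_erase S (fun i => (MvPolynomial.X i : MvPolynomial ι ℚ)) hs]

end Aux

theorem partition_power_identity (n : ℕ) (hn : 0 < n) :
    (1 + ∑ i : Fin n, X i : MvPolynomial (Fin n) ℚ) ^ (n - 1) =
      ∑ P ∈ partitionsOf (Finset.univ : Finset (Fin n)),
        ∏ B ∈ P, (∑ b ∈ B, X b) ^ (B.card - 1) := by
  have h := mainGen (Finset.univ : Finset (Fin n))
  have hpp : partsOf (Finset.univ : Finset (Fin n)) = partitionsOf Finset.univ := by
    ext P
    rw [mem_partsOf, partitionsOf, Finset.mem_filter]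
    exact ⟨fun h2 => ⟨Finset.mem_univ P, h2⟩, fun h2 => h2.2⟩
  rw [hpp, Finset.card_univ, Fintype.card_fin] at h
  exact h
end

section
/- For positive integers ℓ < n and indeterminates x_1,...,x_n, one has binom(n-1, ℓ-1) * (x_1+...+x_n)^{n-ℓ} = sum over set partitions π of {1,...,n} with exactly ℓ blocks of the product over blocks B of (sum_{b in B} x_b)^{|B|-1}. -/
open Polynomial in
private lemma poly_eq_of_deriv_eq {R : Type} [CommRing R] [IsDomain R] [CharZero R]
    {p q : R[X]} (hd : derivative p = derivative q) (h0 : p.coeff 0 = q.coeff 0) : p = q := by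
  ext n
  cases n with
  | zero => exact h0
  | succ n =>
    have h := congrArg (fun r => Polynomial.coeff r n) hd
    simp only [coeff_derivative] at h
    have hn : ((n : R) + 1) ≠ 0 := Nat.cast_add_one_ne_zero n
    exact mul_right_cancel₀ hn h

private lemma reindex_sum {M : Type} [AddCommMonoid M] {α : Type} [DecidableEq α]
    (S : Finset α) (f : α → Finset α → M) :
    ∑ T ∈ S.powerset.erase S, ∑ w ∈ T, f w T
      = ∑ w ∈ S, ∑ T ∈ (S.erase w).powerset.erase (S.erase w), f w (insert w T) := by
  rw [Finset.sum_sigma', Finset.sum_sigma']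
  refine Finset.sum_bij' (fun a _ => ⟨a.2, a.1.erase a.2⟩) (fun a _ => ⟨insert a.1 a.2, a.1⟩)
    ?_ ?_ ?_ ?_ ?_
  · rintro ⟨T, w⟩ ha
    simp only [Finset.mem_sigma, Finset.mem_erase, Finset.mem_powerset] at ha ⊢
    obtain ⟨⟨hTS, hTsub⟩, hw⟩ := ha
    have hwS : w ∈ S := hTsub hw
    refine ⟨hwS, ?_, Finset.erase_subset_erase _ hTsub⟩
    intro heq
    apply hTS
    have : insert w (T.erase w) = insert w (S.erase w) := by rw [heq]
    rwa [Finset.insert_erase hw, Finset.insert_erase hwS] at this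
  · rintro ⟨w, T⟩ ha
    simp only [Finset.mem_sigma, Finset.mem_erase, Finset.mem_powerset] at ha ⊢
    obtain ⟨hwS, hTne, hTsub⟩ := ha
    have hwT : w ∉ T := fun h => (Finset.mem_erase.mp (hTsub h)).1 rfl
    constructor
    · constructor
      · intro hins
        apply hTne
        rw [← hins, Finset.erase_insert hwT]
      · intro x hx
        rcases Finset.mem_insert.mp hx with h | h
        · exact h ▸ hwS
        · exact (Finset.mem_erase.mp (hTsub h)).2
    · exact Finset.mem_insert_self _ _
  · rintro ⟨T, w⟩ ha
    simp only [Finset.mem_sigma, Finset.mem_erase, Finset.mem_powerset] at ha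
    have : insert w (T.erase w) = T := Finset.insert_erase ha.2
    simp [this]
  · rintro ⟨w, T⟩ ha
    simp only [Finset.mem_sigma, Finset.mem_erase, Finset.mem_powerset] at ha
    have hwT : w ∉ T := fun h => (Finset.mem_erase.mp (ha.2.2 h)).1 rfl
    simp [Finset.erase_insert hwT]
  · rintro ⟨T, w⟩ ha
    simp only [Finset.mem_sigma, Finset.mem_erase, Finset.mem_powerset] at ha
    rw [Finset.insert_erase ha.2]

open Polynomial in
private lemma hurwitz_s3 : ∀ (s : ℕ), ∀ {R : Type} [CommRing R] [IsDomain R] [CharZero R]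
    {α : Type} [DecidableEq α] (S : Finset α), S.card = s → ∀ (a : α → R) (x y : R),
    ∑ T ∈ S.powerset.erase S,
        (x + ∑ i ∈ T, a i) ^ T.card * (y * (y + ∑ i ∈ S \ T, a i) ^ ((S \ T).card - 1))
      = (x + y + ∑ i ∈ S, a i) ^ s - (x + ∑ i ∈ S, a i) ^ s := by
  intro s
  induction s using Nat.strong_induction_on with
  | _ s IH =>
    intro R _ _ _ α _ S hS a x y
    rcases Nat.eq_zero_or_pos s with h0 | hpos
    · subst h0
      rw [Finset.card_eq_zero] at hS
      subst hS
      simp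
    · obtain ⟨m, rfl⟩ : ∃ m, s = m + 1 := ⟨s - 1, (Nat.succ_pred_eq_of_pos hpos).symm⟩
      have hSne : S.Nonempty := Finset.card_pos.mp (hS ▸ Nat.succ_pos m)
      -- the element-wise sum over S.erase w equals sum over S minus a w
      have e1 : ∀ w ∈ S, a w + ∑ i ∈ S.erase w, a i = ∑ i ∈ S, a i :=
        fun w hw => Finset.add_sum_erase S a hw
      set P : R[X] := ∑ T ∈ S.powerset.erase S,
        (X + C (∑ i ∈ T, a i)) ^ T.card *
          C (y * (y + ∑ i ∈ S \ T, a i) ^ ((S \ T).card - 1)) with hP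
      set Q : R[X] := (X + C (y + ∑ i ∈ S, a i)) ^ (m+1) - (X + C (∑ i ∈ S, a i)) ^ (m+1)
        with hQ
      have hPQ : P = Q := by
        apply poly_eq_of_deriv_eq
        · -- derivatives agree
          rw [hP, hQ, derivative_sum]
          have step1 : ∀ T ∈ S.powerset.erase S,
              derivative ((X + C (∑ i ∈ T, a i)) ^ T.card *
                C (y * (y + ∑ i ∈ S \ T, a i) ^ ((S \ T).card - 1)))
              = ∑ w ∈ T, (X + C (∑ i ∈ T, a i)) ^ (T.card - 1) *
                  C (y * (y + ∑ i ∈ S \ T, a i) ^ ((S \ T).card - 1)) := by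
            intro T _
            rw [derivative_mul, derivative_C, mul_zero, add_zero, derivative_pow,
              derivative_add, derivative_X, derivative_C, add_zero, mul_one,
              Finset.sum_const, nsmul_eq_mul, Polynomial.C_eq_natCast]
            ring
          rw [Finset.sum_congr rfl step1, reindex_sum S
            (fun w T => (X + C (∑ i ∈ T, a i)) ^ (T.card - 1) *
              C (y * (y + ∑ i ∈ S \ T, a i) ^ ((S \ T).card - 1)))]
          have step2 : ∀ w ∈ S, ∑ T ∈ ((S.erase w).powerset).erase (S.erase w),
              (X + C (∑ i ∈ insert w T, a i)) ^ ((insert w T).card - 1) *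
                C (y * (y + ∑ i ∈ S \ insert w T, a i) ^ ((S \ insert w T).card - 1))
              = (X + C (y + ∑ i ∈ S, a i)) ^ m - (X + C (∑ i ∈ S, a i)) ^ m := by
            intro w hw
            have key := IH m (Nat.lt_succ_self m) (S.erase w)
              (by rw [Finset.card_erase_of_mem hw, hS]; rfl)
              (fun i => C (a i)) (X + C (a w)) (C y)
            have crhs1 : X + C (a w) + C y + ∑ i ∈ S.erase w, (C (a i) : R[X])
                = X + C (y + ∑ i ∈ S, a i) := by
              rw [← map_sum, ← e1 w hw]
              simp only [C_add]
              ring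
            have crhs2 : X + C (a w) + ∑ i ∈ S.erase w, (C (a i) : R[X])
                = X + C (∑ i ∈ S, a i) := by
              rw [← map_sum, ← e1 w hw]
              simp only [C_add]
              ring
            rw [crhs1, crhs2] at key
            rw [← key]
            apply Finset.sum_congr rfl
            intro T hT
            simp only [Finset.mem_erase, Finset.mem_powerset] at hT
            have hwT : w ∉ T := fun h => (Finset.mem_erase.mp (hT.2 h)).1 rfl
            have hins : S \ insert w T = (S.erase w) \ T := by
              rw [Finset.sdiff_insert, Finset.erase_sdiff_comm]
            rw [hins, Finset.sum_insert hwT, Finset.card_insert_of_notMem hwT,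
              Nat.add_sub_cancel]
            simp only [C_add, C_mul, C_pow, map_sum]
            ring
          rw [Finset.sum_congr rfl step2, Finset.sum_const, hS, derivative_sub,
            derivative_pow, derivative_pow, derivative_add, derivative_add,
            derivative_X, derivative_C, derivative_C, Nat.add_sub_cancel,
            nsmul_eq_mul, Polynomial.C_eq_natCast]
          ring
        · -- constant coefficients agree
          rw [hP, hQ, Polynomial.coeff_zero_eq_eval_zero, Polynomial.coeff_zero_eq_eval_zero]
          rw [Polynomial.eval_finset_sum]
          simp only [eval_mul, eval_pow, eval_add, eval_X, eval_C, eval_sub, zero_add]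
          have hemp : (∅ : Finset α) ∈ S.powerset.erase S := by
            simp only [Finset.mem_erase, Finset.mem_powerset]
            exact ⟨fun h => hSne.ne_empty h.symm, Finset.empty_subset S⟩
          rw [← Finset.add_sum_erase _ _ hemp]
          have step3 : ∀ T ∈ (S.powerset.erase S).erase ∅,
              (∑ i ∈ T, a i) ^ T.card * (y * (y + ∑ i ∈ S \ T, a i) ^ ((S \ T).card - 1))
              = ∑ w ∈ T, a w * ((∑ i ∈ T, a i) ^ (T.card - 1) *
                  (y * (y + ∑ i ∈ S \ T, a i) ^ ((S \ T).card - 1))) := by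
            intro T hT
            simp only [Finset.mem_erase] at hT
            have hTne : T.Nonempty := Finset.nonempty_iff_ne_empty.mpr hT.1
            obtain ⟨t, ht⟩ : ∃ t, T.card = t + 1 :=
              ⟨T.card - 1, (Nat.succ_pred_eq_of_pos (Finset.card_pos.mpr hTne)).symm⟩
            rw [← Finset.sum_mul, ht]
            simp only [Nat.add_sub_cancel]
            rw [pow_succ]
            ring
          rw [Finset.sum_congr rfl step3]
          have ext0 : ∑ T ∈ (S.powerset.erase S).erase ∅, ∑ w ∈ T, a w *
                ((∑ i ∈ T, a i) ^ (T.card - 1) *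
                  (y * (y + ∑ i ∈ S \ T, a i) ^ ((S \ T).card - 1)))
              = ∑ T ∈ S.powerset.erase S, ∑ w ∈ T, a w *
                ((∑ i ∈ T, a i) ^ (T.card - 1) *
                  (y * (y + ∑ i ∈ S \ T, a i) ^ ((S \ T).card - 1))) := by
            rw [← Finset.add_sum_erase _ _ hemp]
            simp
          rw [ext0, reindex_sum S (fun w T => a w * ((∑ i ∈ T, a i) ^ (T.card - 1) *
            (y * (y + ∑ i ∈ S \ T, a i) ^ ((S \ T).card - 1))))]
          have step4 : ∀ w ∈ S, ∑ T ∈ ((S.erase w).powerset).erase (S.erase w),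
              a w * ((∑ i ∈ insert w T, a i) ^ ((insert w T).card - 1) *
                (y * (y + ∑ i ∈ S \ insert w T, a i) ^ ((S \ insert w T).card - 1)))
              = a w * ((y + ∑ i ∈ S, a i) ^ m - (∑ i ∈ S, a i) ^ m) := by
            intro w hw
            rw [← Finset.mul_sum]
            congr 1
            have key := IH m (Nat.lt_succ_self m) (S.erase w)
              (by rw [Finset.card_erase_of_mem hw, hS]; rfl) a (a w) y
            have crhs1 : a w + y + ∑ i ∈ S.erase w, a i = y + ∑ i ∈ S, a i := by
              rw [← e1 w hw]; ring
            have crhs2 : a w + ∑ i ∈ S.erase w, a i = ∑ i ∈ S, a i := e1 w hw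
            rw [crhs1, crhs2] at key
            rw [← key]
            apply Finset.sum_congr rfl
            intro T hT
            simp only [Finset.mem_erase, Finset.mem_powerset] at hT
            have hwT : w ∉ T := fun h => (Finset.mem_erase.mp (hT.2 h)).1 rfl
            have hins : S \ insert w T = (S.erase w) \ T := by
              rw [Finset.sdiff_insert, Finset.erase_sdiff_comm]
            rw [hins, Finset.sum_insert hwT, Finset.card_insert_of_notMem hwT,
              Nat.add_sub_cancel]
          rw [Finset.sum_congr rfl step4, ← Finset.sum_mul]
          simp only [Finset.sum_empty, Finset.card_empty, pow_zero, one_mul,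
            Finset.sdiff_empty, hS, Nat.add_sub_cancel]
          ring
      have := congrArg (Polynomial.eval x) hPQ
      rw [hP, hQ] at this
      rw [Polynomial.eval_finset_sum] at this
      simp only [eval_mul, eval_pow, eval_add, eval_X, eval_C, eval_sub] at this
      rw [this]
      ring

open Polynomial in
private lemma hurwitz_binom {R : Type} [CommRing R] [IsDomain R] [CharZero R]
    {α : Type} [DecidableEq α] (S : Finset α) (a : α → R) (x : R) (j : ℕ) :
    ∑ T ∈ S.powerset.erase S, (x + ∑ i ∈ T, a i) ^ T.card *
        ((∑ i ∈ S \ T, a i) ^ (((S \ T).card - 1) - j) * ((((S \ T).card - 1).choose j : ℕ) : R))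
      = (x + ∑ i ∈ S, a i) ^ (S.card - (j+1)) * ((S.card.choose (j+1) : ℕ) : R) := by
  have key := hurwitz_s3 S.card (R := R[X]) (S := S) rfl (fun i => C (a i)) (C x) (X : R[X])
  have key2 : ∑ T ∈ S.powerset.erase S,
      (C ((x + ∑ i ∈ T, a i) ^ T.card) : R[X]) *
        (X * (X + C (∑ i ∈ S \ T, a i)) ^ ((S \ T).card - 1))
      = (X + C (x + ∑ i ∈ S, a i)) ^ S.card - C ((x + ∑ i ∈ S, a i) ^ S.card) := by
    have e2 : ∀ T ∈ S.powerset.erase S,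
        (C ((x + ∑ i ∈ T, a i) ^ T.card) : R[X]) *
          (X * (X + C (∑ i ∈ S \ T, a i)) ^ ((S \ T).card - 1))
        = (C x + ∑ i ∈ T, C (a i)) ^ T.card *
          (X * (X + ∑ i ∈ S \ T, C (a i)) ^ ((S \ T).card - 1)) := by
      intro T _
      simp only [C_add, C_pow, map_sum]
    rw [Finset.sum_congr rfl e2, key]
    simp only [C_add, C_pow, map_sum]
    ring
  have h := congrArg (fun p => Polynomial.coeff p (j+1)) key2
  simp only [Polynomial.finset_sum_coeff, Polynomial.coeff_sub, Polynomial.coeff_C_mul,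
    Polynomial.coeff_X_mul, Polynomial.coeff_X_add_C_pow, Polynomial.coeff_C,
    Nat.succ_ne_zero, if_false, sub_zero] at h
  exact h


open MvPolynomial Finset

private noncomputable def pw {n : ℕ} (P : Finset (Finset (Fin n))) : MvPolynomial (Fin n) ℚ :=
  ∏ B ∈ P, (∑ b ∈ B, X b) ^ (B.card - 1)

private noncomputable def F (n : ℕ) (U : Finset (Fin n)) (k : ℕ) : MvPolynomial (Fin n) ℚ :=
  ∑ P ∈ (partitionsOf U).filter (fun P => P.card = k), pw P

private lemma mem_pf {n : ℕ} {U : Finset (Fin n)} {k : ℕ} {P : Finset (Finset (Fin n))} :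
    P ∈ (partitionsOf U).filter (fun P => P.card = k) ↔
      ((∀ B ∈ P, B.Nonempty) ∧ (∀ B ∈ P, ∀ B' ∈ P, B ≠ B' → Disjoint B B') ∧ P.sup id = U)
        ∧ P.card = k := by
  simp [partitionsOf, IsSetPartition]

private lemma mem_pf' {n : ℕ} {U : Finset (Fin n)} {k : ℕ} {P : Finset (Finset (Fin n))} :
    P ∈ (partitionsOf U).filter (fun P => P.card = k) ↔
      (∀ B ∈ P, B.Nonempty) ∧ (∀ B ∈ P, ∀ B' ∈ P, B ≠ B' → Disjoint B B') ∧ P.sup id = U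
        ∧ P.card = k := by
  rw [mem_pf]; tauto

private lemma F_empty_pos (n k : ℕ) (hk : 0 < k) : F n ∅ k = 0 := by
  rw [F]
  convert Finset.sum_empty
  ext P
  simp only [mem_pf, Finset.notMem_empty, iff_false, not_and]
  rintro ⟨h1, h2, h3⟩ hcard
  have hP : P = ∅ := by
    rw [Finset.eq_empty_iff_forall_notMem]
    intro B hB
    obtain ⟨b, hb⟩ := h1 B hB
    have hble : (id B : Finset (Fin n)) ≤ P.sup id := Finset.le_sup hB
    have : b ∈ P.sup id := hble hb
    rw [h3] at this
    exact Finset.notMem_empty b this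
  rw [hP] at hcard
  simp at hcard
  omega

private lemma F_zero_pos (n : ℕ) (U : Finset (Fin n)) (hU : U.Nonempty) : F n U 0 = 0 := by
  rw [F]
  convert Finset.sum_empty
  ext P
  simp only [mem_pf, Finset.notMem_empty, iff_false, not_and]
  rintro ⟨h1, h2, h3⟩ hcard
  rw [Finset.card_eq_zero] at hcard
  subst hcard
  simp only [Finset.sup_empty, Finset.bot_eq_empty] at h3
  exact hU.ne_empty h3.symm

private lemma F_empty_zero (n : ℕ) : F n ∅ 0 = 1 := by
  rw [F]
  have h : (partitionsOf (∅ : Finset (Fin n))).filter (fun P => P.card = 0) = {∅} := by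
    ext P
    simp only [mem_pf, Finset.mem_singleton]
    constructor
    · rintro ⟨_, hcard⟩
      exact Finset.card_eq_zero.mp hcard
    · rintro rfl
      refine ⟨⟨?_, ?_, ?_⟩, rfl⟩ <;> simp
  rw [h, Finset.sum_singleton]
  simp [pw]

private lemma F_rec (n : ℕ) (U : Finset (Fin n)) (v : Fin n) (hv : v ∈ U) (k : ℕ) :
    F n U (k+1) = ∑ T ∈ (U.erase v).powerset,
      (∑ b ∈ insert v T, X b) ^ T.card * F n ((U.erase v) \ T) k := by
  rw [F]
  have h1 : ∀ P ∈ (partitionsOf U).filter (fun P => P.card = k+1),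
      pw P = ∑ B ∈ P.filter (fun B => v ∈ B), pw P := by
    intro P hP
    rw [mem_pf'] at hP
    obtain ⟨hne, hdis, hsup, hcard⟩ := hP
    have hvsup : v ∈ P.sup id := hsup ▸ hv
    obtain ⟨B0, hB0, hvB0⟩ : ∃ B ∈ P, v ∈ B := by
      simpa using Finset.mem_sup.mp hvsup
    have hfil : P.filter (fun B => v ∈ B) = {B0} := by
      ext B
      simp only [Finset.mem_filter, Finset.mem_singleton]
      constructor
      · rintro ⟨hBP, hvB⟩
        by_contra hBne
        exact (Finset.disjoint_left.mp (hdis B hBP B0 hB0 hBne)) hvB hvB0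
      · rintro rfl
        exact ⟨hB0, hvB0⟩
    rw [hfil, Finset.sum_singleton]
  rw [Finset.sum_congr rfl h1]
  have h2 : ∀ T ∈ (U.erase v).powerset,
      (∑ b ∈ insert v T, X b : MvPolynomial (Fin n) ℚ) ^ T.card * F n ((U.erase v) \ T) k
      = ∑ Q ∈ (partitionsOf ((U.erase v) \ T)).filter (fun Q => Q.card = k),
          (∑ b ∈ insert v T, X b : MvPolynomial (Fin n) ℚ) ^ T.card * pw Q := by
    intro T _
    rw [F, Finset.mul_sum]
  rw [Finset.sum_congr rfl h2, Finset.sum_sigma', Finset.sum_sigma']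
  refine Finset.sum_bij' (fun a _ => ⟨a.2.erase v, a.1.erase a.2⟩)
    (fun a _ => ⟨insert (insert v a.1) a.2, insert v a.1⟩) ?_ ?_ ?_ ?_ ?_
  · -- forward membership
    rintro ⟨P, B⟩ ha
    simp only [Finset.mem_sigma, Finset.mem_filter] at ha
    obtain ⟨⟨hPmem, hcard⟩, hBP, hvB⟩ := ha
    obtain ⟨hne, hdis, hsup⟩ : IsSetPartition U P := (Finset.mem_filter.mp hPmem).2
    have hBU : B ⊆ U := by
      have : (id B : Finset (Fin n)) ≤ P.sup id := Finset.le_sup hBP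
      rwa [hsup] at this
    have hUB : (U.erase v) \ (B.erase v) = U \ B := by
      ext x
      simp only [Finset.mem_sdiff, Finset.mem_erase]
      constructor
      · rintro ⟨⟨hxv, hxU⟩, hxB⟩
        exact ⟨hxU, fun hxBmem => hxB ⟨hxv, hxBmem⟩⟩
      · rintro ⟨hxU, hxB⟩
        have hxv : x ≠ v := fun h => hxB (h ▸ hvB)
        exact ⟨⟨hxv, hxU⟩, fun h => hxB h.2⟩
    simp only [Finset.mem_sigma, Finset.mem_powerset, Finset.mem_filter, partitionsOf,
      Finset.mem_univ, true_and, hUB]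
    refine ⟨Finset.erase_subset_erase v hBU, ⟨?_, ?_, ?_⟩, ?_⟩
    · exact fun B' hB' => hne B' (Finset.mem_of_mem_erase hB')
    · exact fun B' hB' B'' hB'' hne' =>
        hdis B' (Finset.mem_of_mem_erase hB') B'' (Finset.mem_of_mem_erase hB'') hne'
    · ext x
      simp only [Finset.mem_sup, Finset.mem_erase, Finset.mem_sdiff, id]
      constructor
      · rintro ⟨B', ⟨hB'B, hB'P⟩, hxB'⟩
        constructor
        · rw [← hsup]
          exact Finset.mem_sup.mpr ⟨B', hB'P, hxB'⟩
        · intro hxB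
          exact (Finset.disjoint_left.mp (hdis B' hB'P B hBP hB'B)) hxB' hxB
      · rintro ⟨hxU, hxB⟩
        rw [← hsup] at hxU
        obtain ⟨B', hB', hxB'⟩ := Finset.mem_sup.mp hxU
        have hB'B : B' ≠ B := by
          intro h
          subst h
          exact hxB hxB'
        exact ⟨B', ⟨hB'B, hB'⟩, hxB'⟩
    · rw [Finset.card_erase_of_mem hBP, hcard, Nat.add_sub_cancel]
  · -- backward membership
    rintro ⟨T, Q⟩ ha
    simp only [Finset.mem_sigma, Finset.mem_powerset, Finset.mem_filter] at ha
    obtain ⟨hT, hQmem, hcard⟩ := ha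
    obtain ⟨hne, hdis, hsup⟩ : IsSetPartition ((U.erase v) \ T) Q :=
      (Finset.mem_filter.mp hQmem).2
    have hvT : v ∉ T := fun h => (Finset.mem_erase.mp (hT h)).1 rfl
    have hQsub : ∀ B' ∈ Q, B' ⊆ (U.erase v) \ T := by
      intro B' hB'
      have : (id B' : Finset (Fin n)) ≤ Q.sup id := Finset.le_sup hB'
      rwa [hsup] at this
    have hBQ : insert v T ∉ Q := by
      intro h
      have := hQsub _ h (Finset.mem_insert_self v T)
      rw [Finset.mem_sdiff, Finset.mem_erase] at this
      exact this.1.1 rfl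
    simp only [Finset.mem_sigma, Finset.mem_filter, partitionsOf, Finset.mem_univ, true_and]
    refine ⟨⟨⟨?_, ?_, ?_⟩, ?_⟩, Finset.mem_insert_self _ _, Finset.mem_insert_self v T⟩
    · intro B hB
      rcases Finset.mem_insert.mp hB with rfl | hB
      · exact Finset.insert_nonempty v T
      · exact hne B hB
    · intro B hB B' hB' hBB'
      have hd : ∀ B'' ∈ Q, Disjoint (insert v T) B'' := by
        intro B'' hB''
        rw [Finset.disjoint_left]
        intro x hx hxB''
        have hmem := hQsub B'' hB'' hxB''
        rw [Finset.mem_sdiff, Finset.mem_erase] at hmem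
        rcases Finset.mem_insert.mp hx with rfl | hx
        · exact hmem.1.1 rfl
        · exact hmem.2 hx
      rcases Finset.mem_insert.mp hB with rfl | hB
      · rcases Finset.mem_insert.mp hB' with rfl | hB'
        · exact absurd rfl hBB'
        · exact hd B' hB'
      · rcases Finset.mem_insert.mp hB' with rfl | hB'
        · exact (hd B hB).symm
        · exact hdis B hB B' hB' hBB'
    · rw [Finset.sup_insert, hsup]
      ext x
      simp only [Finset.mem_sup, Finset.mem_sdiff, Finset.mem_erase, id,
        Finset.sup_eq_union, Finset.mem_union, Finset.mem_insert]
      constructor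
      · rintro ((rfl | hx) | hx)
        · exact hv
        · exact (Finset.mem_erase.mp (hT hx)).2
        · exact hx.1.2
      · intro hxU
        by_cases hxv : x = v
        · exact Or.inl (Or.inl hxv)
        · by_cases hxT : x ∈ T
          · exact Or.inl (Or.inr hxT)
          · exact Or.inr ⟨⟨hxv, hxU⟩, hxT⟩
    · rw [Finset.card_insert_of_notMem hBQ, hcard]
  · -- left inverse
    rintro ⟨P, B⟩ ha
    simp only [Finset.mem_sigma, Finset.mem_filter] at ha
    obtain ⟨_, hBP, hvB⟩ := ha
    simp only [Finset.insert_erase hvB, Finset.insert_erase hBP]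
  · -- right inverse
    rintro ⟨T, Q⟩ ha
    simp only [Finset.mem_sigma, Finset.mem_powerset, Finset.mem_filter] at ha
    obtain ⟨hT, hQmem, hcard⟩ := ha
    obtain ⟨hne, hdis, hsup⟩ : IsSetPartition ((U.erase v) \ T) Q :=
      (Finset.mem_filter.mp hQmem).2
    have hvT : v ∉ T := fun h => (Finset.mem_erase.mp (hT h)).1 rfl
    have hBQ : insert v T ∉ Q := by
      intro h
      have hsub : (id (insert v T) : Finset (Fin n)) ≤ Q.sup id := Finset.le_sup h
      rw [hsup] at hsub
      have := hsub (Finset.mem_insert_self v T)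
      rw [Finset.mem_sdiff, Finset.mem_erase] at this
      exact this.1.1 rfl
    simp only [Finset.erase_insert hvT, Finset.erase_insert hBQ]
  · -- values
    rintro ⟨P, B⟩ ha
    simp only [Finset.mem_sigma, Finset.mem_filter] at ha
    obtain ⟨_, hBP, hvB⟩ := ha
    simp only [Finset.insert_erase hvB, Finset.card_erase_of_mem hvB]
    exact (Finset.mul_prod_erase P _ hBP).symm

private lemma F_eq (n : ℕ) : ∀ (s : ℕ), ∀ (U : Finset (Fin n)), U.card = s → U.Nonempty →
    ∀ k : ℕ, F n U (k+1) = (∑ b ∈ U, X b) ^ (U.card - (k+1)) *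
      (((U.card - 1).choose k : ℕ) : MvPolynomial (Fin n) ℚ) := by
  intro s
  induction s using Nat.strong_induction_on with
  | _ s IH =>
    intro U hU hUne k
    obtain ⟨v, hv⟩ := hUne
    have hca : (U.erase v).card = U.card - 1 := Finset.card_erase_of_mem hv
    have hUpos : 0 < U.card := Finset.card_pos.mpr ⟨v, hv⟩
    rw [F_rec n U v hv k,
      ← Finset.add_sum_erase _ _ (Finset.mem_powerset_self (U.erase v))]
    have hne' : ∀ T ∈ ((U.erase v).powerset).erase (U.erase v),
        (U.erase v \ T).Nonempty := by
      intro T hT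
      simp only [Finset.mem_erase, Finset.mem_powerset] at hT
      rw [Finset.sdiff_nonempty]
      exact fun h => hT.1 (Finset.Subset.antisymm hT.2 h)
    cases k with
    | zero =>
      rw [Finset.sdiff_self, F_empty_zero]
      have hz : ∀ T ∈ ((U.erase v).powerset).erase (U.erase v),
          (∑ b ∈ insert v T, X b : MvPolynomial (Fin n) ℚ) ^ T.card *
            F n (U.erase v \ T) 0 = 0 := by
        intro T hT
        rw [F_zero_pos n _ (hne' T hT), mul_zero]
      rw [Finset.sum_congr rfl hz, Finset.sum_const_zero, add_zero, mul_one,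
        Finset.insert_erase hv, hca]
      simp
    | succ j =>
      rw [Finset.sdiff_self, F_empty_pos n (j+1) (Nat.succ_pos j), mul_zero, zero_add]
      have hterm : ∀ T ∈ ((U.erase v).powerset).erase (U.erase v),
          (∑ b ∈ insert v T, X b : MvPolynomial (Fin n) ℚ) ^ T.card *
            F n (U.erase v \ T) (j+1)
          = ((X v : MvPolynomial (Fin n) ℚ) + ∑ b ∈ T, X b) ^ T.card *
            ((∑ b ∈ U.erase v \ T, X b) ^ (((U.erase v \ T).card - 1) - j) *
              ((((U.erase v \ T).card - 1).choose j : ℕ) : MvPolynomial (Fin n) ℚ)) := by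
        intro T hT
        have hTsub : T ⊆ U.erase v := Finset.mem_powerset.mp (Finset.mem_of_mem_erase hT)
        have hvT : v ∉ T := fun h => (Finset.mem_erase.mp (hTsub h)).1 rfl
        have hlt : (U.erase v \ T).card < s := by
          have h1 : (U.erase v \ T).card ≤ (U.erase v).card :=
            Finset.card_le_card Finset.sdiff_subset
          omega
        have hexp : (U.erase v \ T).card - (j+1) = ((U.erase v \ T).card - 1) - j := by
          omega
        rw [IH _ hlt _ rfl (hne' T hT) j, Finset.sum_insert hvT, hexp]
      rw [Finset.sum_congr rfl hterm, hurwitz_binom (U.erase v) (fun i => X i) (X v) j,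
        Finset.add_sum_erase U (fun b => X b) hv, hca]
      have hexp2 : U.card - 1 - (j+1) = U.card - (j+1+1) := by omega
      rw [hexp2]


/- For `1 ≤ ℓ < n`: `C(n-1, ℓ-1) · (x₁+⋯+x_n)^{n-ℓ}` equals the sum over set
partitions of `{1,…,n}` with exactly ℓ blocks of `∏_B (∑_{b∈B} x_b)^(|B|-1)`. -/
theorem partition_power_identity_card (n ℓ : ℕ) (hℓ : 0 < ℓ) (hℓn : ℓ < n) :
    (((n - 1).choose (ℓ - 1) : MvPolynomial (Fin n) ℚ)) *
        (∑ i : Fin n, X i) ^ (n - ℓ) =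
      ∑ P ∈ (partitionsOf (Finset.univ : Finset (Fin n))).filter
          (fun P => P.card = ℓ),
        ∏ B ∈ P, (∑ b ∈ B, X b) ^ (B.card - 1) := by
  obtain ⟨j, rfl⟩ : ∃ j, ℓ = j + 1 := ⟨ℓ - 1, (Nat.succ_pred_eq_of_pos hℓ).symm⟩
  have huniv : (Finset.univ : Finset (Fin n)).card = n := by simp
  have hne : (Finset.univ : Finset (Fin n)).Nonempty := by
    rw [← Finset.card_pos, huniv]; omega
  have h := F_eq n (Finset.univ : Finset (Fin n)).card Finset.univ rfl hne j
  rw [huniv] at h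
  calc ((((n - 1).choose ((j+1) - 1) : ℕ)) : MvPolynomial (Fin n) ℚ) *
        (∑ i : Fin n, X i) ^ (n - (j+1))
      = F n Finset.univ (j+1) := by
        rw [h, Nat.add_sub_cancel]
        ring
    _ = _ := by
        simp only [F, pw]
end

section
/- For any natural number n, nonnegative integer r, and complex number x, the alternating sum over k from 0 to n of (-1)^k binom(n,k) binom(x+k, r+k) equals (-1)^n binom(x, r+n). -/
open Finset

noncomputable def gchoose (x : ℂ) (m : ℕ) : ℂ :=
  (∏ i ∈ Finset.range m, (x - i)) / m.factorial

lemma gchoose_pascal (x : ℂ) (m : ℕ) :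
    gchoose (x + 1) (m + 1) = gchoose x m + gchoose x (m + 1) := by
  unfold gchoose
  rw [Finset.prod_range_succ' (fun i => x + 1 - (i : ℕ)), Finset.prod_range_succ]
  push_cast
  have h1 : ((m.factorial : ℂ)) ≠ 0 := by exact_mod_cast m.factorial_ne_zero
  have hm1 : ((m : ℂ) + 1) ≠ 0 := by
    exact Nat.cast_add_one_ne_zero m
  have hp : (∏ i ∈ Finset.range m, (x + 1 - ((i : ℂ) + 1))) = ∏ i ∈ Finset.range m, (x - i) := by
    apply Finset.prod_congr rfl; intro i _; ring
  rw [hp, Nat.factorial_succ]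
  push_cast
  field_simp
  ring

lemma alt_sum_succ (n : ℕ) (f : ℕ → ℂ) :
    ∑ k ∈ Finset.range (n + 2), (-1 : ℂ) ^ k * ((n + 1).choose k : ℂ) * f k
    = ∑ k ∈ Finset.range (n + 1), (-1 : ℂ) ^ k * (n.choose k : ℂ) * (f k - f (k + 1)) := by
  have key : ∀ k, (-1 : ℂ) ^ (k + 1) * ((n + 1).choose (k + 1) : ℂ) * f (k + 1)
      = (-1 : ℂ) ^ (k + 1) * (n.choose k : ℂ) * f (k + 1)
        + (-1 : ℂ) ^ (k + 1) * (n.choose (k + 1) : ℂ) * f (k + 1) := by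
    intro k
    rw [Nat.choose_succ_succ']
    push_cast
    ring
  rw [Finset.sum_range_succ' (fun k => (-1 : ℂ) ^ k * ((n + 1).choose k : ℂ) * f k)]
  simp only [key, Nat.choose_zero_right, pow_zero, Nat.cast_one, one_mul]
  rw [Finset.sum_add_distrib]
  have h2 : (∑ k ∈ Finset.range (n + 1), (-1 : ℂ) ^ (k + 1) * (n.choose (k + 1) : ℂ) * f (k + 1))
      + f 0
      = ∑ k ∈ Finset.range (n + 1), (-1 : ℂ) ^ k * (n.choose k : ℂ) * f k := by
    have := Finset.sum_range_succ' (fun k => (-1 : ℂ) ^ k * (n.choose k : ℂ) * f k) (n + 1)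
    simp only [Nat.choose_zero_right, pow_zero, Nat.cast_one, one_mul] at this
    rw [← this, Finset.sum_range_succ]
    simp [Nat.choose_succ_self]
  rw [add_assoc, h2, ← Finset.sum_add_distrib]
  apply Finset.sum_congr rfl
  intro k _
  ring

theorem gould_10_18 (n r : ℕ) (x : ℂ) :
    ∑ k ∈ Finset.range (n + 1),
      (-1 : ℂ) ^ k * (n.choose k : ℂ) * gchoose (x + k) (r + k) =
      (-1 : ℂ) ^ n * gchoose x (r + n) := by
  induction n generalizing r with
  | zero => simp
  | succ n ih =>
    rw [show n + 1 + 1 = n + 2 from rfl, alt_sum_succ n (fun k => gchoose (x + k) (r + k))]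
    have step : ∀ k : ℕ, gchoose (x + k) (r + k) - gchoose (x + ((k + 1 : ℕ) : ℂ)) (r + (k + 1))
        = - gchoose (x + k) (r + 1 + k) := by
      intro k
      have h := gchoose_pascal (x + k) (r + k)
      push_cast
      rw [show r + (k + 1) = (r + k) + 1 from by ring,
          show x + ((k : ℂ) + 1) = (x + k) + 1 from by ring, h,
          show r + 1 + k = r + k + 1 from by ring]
      ring
    calc (∑ k ∈ Finset.range (n + 1), (-1 : ℂ) ^ k * (n.choose k : ℂ) *
          (gchoose (x + k) (r + k) - gchoose (x + ((k + 1 : ℕ) : ℂ)) (r + (k + 1))))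
        = ∑ k ∈ Finset.range (n + 1), -((-1 : ℂ) ^ k * (n.choose k : ℂ) *
          gchoose (x + k) (r + 1 + k)) := by
          apply Finset.sum_congr rfl; intro k _; rw [step k]; ring
      _ = -((-1 : ℂ) ^ n * gchoose x (r + 1 + n)) := by
          rw [Finset.sum_neg_distrib, ih (r + 1)]
      _ = (-1 : ℂ) ^ (n + 1) * gchoose x (r + (n + 1)) := by
          rw [show r + 1 + n = r + (n + 1) from by ring]; ring
end

section
/- For any natural number k and complex numbers x, y such that y, y+1, ..., y+k are all nonzero, the sum over i from 0 to k of (-1)^i binom(k,i) binom(x-i, k) / (y+i) equals binom(x+y, k) / (y * binom(y+k, k)). -/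
open Finset

section GouldAux

lemma prodlow (i : ℕ) : ∏ j ∈ range i, ((j : ℂ) - i) = (-1)^i * i.factorial := by
  rw [← Finset.prod_range_reflect]
  have h : ∀ j ∈ range i, ((↑(i - 1 - j) : ℂ) - i) = -1 * ((j:ℂ) + 1) := by
    intro j hj
    rw [mem_range] at hj
    have : i - 1 - j = i - (j+1) := by omega
    rw [this]
    push_cast [Nat.cast_sub (by omega : j+1 ≤ i)]
    ring
  rw [Finset.prod_congr rfl h, Finset.prod_mul_distrib, Finset.prod_const]
  congr 1
  · simp
  · push_cast [← Finset.prod_range_add_one_eq_factorial]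
    rfl

lemma prodhigh (i k : ℕ) (h : i ≤ k) :
    ∏ j ∈ Ico (i+1) (k+1), ((j : ℂ) - i) = (k - i).factorial := by
  rw [Finset.prod_Ico_eq_prod_range]
  have h2 : ∀ j ∈ range (k+1-(i+1)), ((↑(i+1+j) : ℂ) - i) = (j:ℂ) + 1 := by
    intro j _; push_cast; ring
  rw [Finset.prod_congr rfl h2]
  have : k + 1 - (i+1) = k - i := by omega
  rw [this]
  push_cast [← Finset.prod_range_add_one_eq_factorial]
  rfl

lemma erase_eq (i k : ℕ) (h : i ≤ k) :
    (range (k+1)).erase i = range i ∪ Ico (i+1) (k+1) := by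
  ext j
  simp only [mem_erase, mem_range, mem_union, mem_Ico]
  omega

lemma proderase (i k : ℕ) (h : i ≤ k) :
    ∏ j ∈ (range (k+1)).erase i, ((j : ℂ) - i) =
      (-1)^i * i.factorial * (k - i).factorial := by
  rw [erase_eq i k h, Finset.prod_union (by
    rw [Finset.disjoint_left]; intro a ha hb
    simp only [mem_range] at ha; simp only [mem_Ico] at hb; omega),
    prodlow, prodhigh i k h]

lemma key (k : ℕ) (x y : ℂ) :
    ∑ i ∈ range (k+1), ((-1:ℂ)^i * (k.choose i) * gchoose (x - i) k) *
        ∏ j ∈ (range (k+1)).erase i, (y + j)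
      = ∏ m ∈ range k, (x + y - m) := by
  set f : Polynomial ℂ := ∑ i ∈ range (k+1),
      Polynomial.C ((-1:ℂ)^i * (k.choose i) * gchoose (x - i) k) *
        ∏ j ∈ (range (k+1)).erase i, (Polynomial.X + Polynomial.C (j:ℂ)) with hf
  set g : Polynomial ℂ := ∏ m ∈ range k, (Polynomial.X + Polynomial.C (x - m)) with hg
  have hfg : f = g := by
    apply Polynomial.eq_of_degrees_lt_of_eval_index_eq (v := fun i : ℕ => -(i:ℂ))
        (s := range (k+1))
    · intro a _ b _ hab
      simp only [neg_inj] at hab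
      exact_mod_cast hab
    · rw [Finset.card_range]
      apply lt_of_le_of_lt (Polynomial.degree_sum_le _ _)
      apply Finset.sup_lt_iff (by exact_mod_cast WithBot.bot_lt_coe _) |>.2
      intro i hi
      apply lt_of_le_of_lt (Polynomial.degree_mul_le _ _)
      have h1 : (Polynomial.C ((-1:ℂ)^i * (k.choose i) * gchoose (x - i) k)).degree ≤ 0 :=
        Polynomial.degree_C_le
      have h2 : (∏ j ∈ (range (k+1)).erase i, (Polynomial.X + Polynomial.C (j:ℂ))).degree = (k : WithBot ℕ) := by
        rw [Polynomial.degree_prod]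
        have : ∀ j ∈ (range (k+1)).erase i, (Polynomial.X + Polynomial.C (j:ℂ)).degree = 1 :=
          fun j _ => Polynomial.degree_X_add_C (j:ℂ)
        rw [Finset.sum_congr rfl this, Finset.sum_const,
          Finset.card_erase_of_mem hi, Finset.card_range]
        simp
      rw [h2]
      calc _ ≤ (0 : WithBot ℕ) + k := add_le_add_left h1 _
        _ < (k+1 : ℕ) := by
            rw [zero_add]; exact_mod_cast WithBot.coe_lt_coe.2 (Nat.lt_succ_self k)
    · rw [Finset.card_range, hg, Polynomial.degree_prod]
      have : ∀ m ∈ range k, (Polynomial.X + Polynomial.C (x - m)).degree = 1 :=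
        fun m _ => Polynomial.degree_X_add_C _
      rw [Finset.sum_congr rfl this, Finset.sum_const, Finset.card_range]
      simp only [nsmul_eq_mul, mul_one]
      exact_mod_cast WithBot.coe_lt_coe.2 (Nat.lt_succ_self k)
    · intro i hi
      rw [mem_range] at hi
      have hik : i ≤ k := by omega
      have hgv : g.eval (-(i:ℂ)) = ∏ m ∈ range k, (x - i - m) := by
        rw [hg, Polynomial.eval_prod]
        exact Finset.prod_congr rfl fun m _ => by simp; ring
      rw [hgv, hf, Polynomial.eval_finset_sum]
      rw [Finset.sum_eq_single_of_mem i (mem_range.2 hi)]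
      · rw [Polynomial.eval_mul, Polynomial.eval_C, Polynomial.eval_prod]
        have : ∀ j ∈ (range (k+1)).erase i,
            (Polynomial.X + Polynomial.C (j:ℂ)).eval (-(i:ℂ)) = (j:ℂ) - i :=
          fun j _ => by simp; ring
        rw [Finset.prod_congr rfl this, proderase i k hik, gchoose]
        have hk : (k.factorial : ℂ) ≠ 0 := by exact_mod_cast k.factorial_ne_zero
        have hcf : ((k.choose i : ℂ)) * i.factorial * (k-i).factorial = k.factorial := by
          exact_mod_cast congrArg (Nat.cast : ℕ → ℂ)
            (Nat.choose_mul_factorial_mul_factorial hik)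
        have hsq : ((-1:ℂ))^i * (-1)^i = 1 := by
          rw [← pow_add, ← two_mul, pow_mul]; norm_num
        field_simp
        rw [← hcf]
        linear_combination ((k.choose i : ℂ) * (∏ m ∈ range k, (x - i - m)) *
          i.factorial * (k - i).factorial) * hsq
      · intro b hb hbi
        rw [Polynomial.eval_mul, Polynomial.eval_prod]
        rw [Finset.prod_eq_zero (Finset.mem_erase.2 ⟨Ne.symm hbi, mem_range.2 hi⟩)
          (by simp)]
        ring
  have := congrArg (Polynomial.eval y) hfg
  rw [hf, hg, Polynomial.eval_finset_sum, Polynomial.eval_prod] at this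
  calc ∑ i ∈ range (k+1), ((-1:ℂ)^i * (k.choose i) * gchoose (x - i) k) *
        ∏ j ∈ (range (k+1)).erase i, (y + j)
      = ∑ i ∈ range (k+1), (Polynomial.C ((-1:ℂ)^i * (k.choose i) * gchoose (x - i) k) *
        ∏ j ∈ (range (k+1)).erase i, (Polynomial.X + Polynomial.C (j:ℂ))).eval y := by
        apply Finset.sum_congr rfl; intro i _
        rw [Polynomial.eval_mul, Polynomial.eval_C, Polynomial.eval_prod]
        congr 1
        exact Finset.prod_congr rfl fun j _ => by simp
    _ = ∏ m ∈ range k, (x + y - m) := by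
        rw [this]
        exact Finset.prod_congr rfl fun m _ => by simp; ring

lemma ygch (k : ℕ) (y : ℂ) :
    y * (∏ m ∈ range k, (y + k - m)) = ∏ j ∈ range (k+1), (y + j) := by
  have h1 : ∏ m ∈ range k, (y + k - m) = ∏ m ∈ range k, (y + (m+1)) := by
    rw [← Finset.prod_range_reflect (fun m => y + ((m:ℂ) + 1)) k]
    apply Finset.prod_congr rfl
    intro m hm
    rw [mem_range] at hm
    have h3 : k - 1 - m = k - (m+1) := by omega
    rw [h3]
    push_cast [Nat.cast_sub (by omega : m + 1 ≤ k)]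
    ring
  rw [h1, Finset.prod_range_succ' (fun j => y + (j:ℂ))]
  have : ∀ m ∈ range k, (y + ((m:ℂ)+1)) = y + ((m+1 : ℕ):ℂ) := by
    intro m _; push_cast; ring
  rw [Finset.prod_congr rfl this]
  push_cast
  ring

end GouldAux

/- Gould's identity (1.18): for `k ∈ ℕ` and `x, y ∈ ℂ` with
`y, y+1, …, y+k` all nonzero,
`∑_{i=0}^k (-1)^i C(k,i) binom(x-i, k)/(y+i) = binom(x+y,k)/(y·binom(y+k,k))`. -/
theorem gould_1_18 (k : ℕ) (x y : ℂ) (hy : ∀ i : ℕ, i ≤ k → y + i ≠ 0) :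
    ∑ i ∈ Finset.range (k + 1),
      (-1 : ℂ) ^ i * (k.choose i : ℂ) * gchoose (x - i) k / (y + i) =
      gchoose (x + y) k / (y * gchoose (y + k) k) := by

  have hP : ∀ j ∈ range (k+1), y + (j:ℂ) ≠ 0 := fun j hj => hy j (by
    rw [mem_range] at hj; omega)
  have hPne : (∏ j ∈ range (k+1), (y + (j:ℂ))) ≠ 0 := Finset.prod_ne_zero_iff.2 hP
  have hk : (k.factorial : ℂ) ≠ 0 := by exact_mod_cast k.factorial_ne_zero
  have hdenom : y * gchoose (y + k) k = (∏ j ∈ range (k+1), (y + j)) / k.factorial := by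
    rw [gchoose, ← ygch k y]
    field_simp
  have hstep : ∀ i ∈ range (k+1),
      (-1 : ℂ) ^ i * (k.choose i : ℂ) * gchoose (x - i) k / (y + i) =
      ((-1 : ℂ) ^ i * (k.choose i : ℂ) * gchoose (x - i) k) *
        (∏ j ∈ (range (k+1)).erase i, (y + j)) / ∏ j ∈ range (k+1), (y + j) := by
    intro i hi
    have herase : (∏ j ∈ (range (k+1)).erase i, (y + (j:ℂ))) ≠ 0 :=
      Finset.prod_ne_zero_iff.2 fun j hj => hP j (Finset.mem_of_mem_erase hj)
    have hyi := hP i hi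
    rw [← Finset.mul_prod_erase _ _ hi]
    field_simp
  rw [Finset.sum_congr rfl hstep, ← Finset.sum_div, key, hdenom, gchoose]
  rw [div_div_div_cancel_right₀]
  exact hk
end
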